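/- arXiv:2207.13319 — 4 statements merged into one kernel-verified Lean document; each statement's English description precedes it below -/
import Mathlib

section
/- Among forecasts of the form Ŷ_s = α + λᵀU(s) + βᵀX_s subject to the weak-demographic-parity constraint cov[Ŷ_S, U(S)] = 0, the squared loss E[(Ŷ_S − Y_S)²] is minimized by the SEO forecast: β = β_F, λ = −Mβ_F, α = α_F, where M = var[U(S)]⁻¹cov[U(S), X_S]. -/
open MeasureTheory Matrix Finset

lemma aux_mul_int {Ω : Type*} [MeasurableSpace Ω] {P : Measure Ω} {f g : Ω → ℝ}
    (hf : MemLp f 2 P) (hg : MemLp g 2 P) : Integrable (fun ω => f ω * g ω) P := by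
  have h1 : Integrable (fun ω => f ω ^ 2) P := (memLp_two_iff_integrable_sq hf.1).mp hf
  have h2 : Integrable (fun ω => g ω ^ 2) P := (memLp_two_iff_integrable_sq hg.1).mp hg
  refine Integrable.mono' (h1.add h2) (hf.1.mul hg.1) (ae_of_all _ fun ω => ?_)
  have h3 : |f ω * g ω| ≤ f ω ^ 2 + g ω ^ 2 := by
    rw [abs_mul]
    nlinarith [abs_nonneg (f ω), abs_nonneg (g ω), sq_abs (f ω), sq_abs (g ω),
      sq_nonneg (|f ω| - |g ω|)]
  simpa [Real.norm_eq_abs, abs_mul] using h3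

lemma aux_split {Ω : Type*} [MeasurableSpace Ω] {P : Measure Ω} {m : ℕ}
    (S : Ω → Fin (m + 1)) (hS : Measurable S) {f : Ω → ℝ} (hf : Integrable f P) :
    ∫ ω, f ω ∂P = ∑ s, ∫ ω in {ω | S ω = s}, f ω ∂P := by
  have hA : ∀ s, MeasurableSet {ω | S ω = s} := fun s => hS (measurableSet_singleton s)
  have hUu : (⋃ s, {ω | S ω = s}) = Set.univ := by ext ω; simp
  have hd : Pairwise (Function.onFun Disjoint (fun s => {ω | S ω = s})) := by
    intro s t hst
    refine Set.disjoint_left.mpr fun ω h1 h2 => hst ?_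
    rw [Set.mem_setOf_eq] at h1 h2; rw [← h1, h2]
  have h := MeasureTheory.integral_iUnion hA hd (by rw [hUu]; exact hf.integrableOn)
  rw [hUu] at h
  rw [← setIntegral_univ (μ := P) (f := f), h, tsum_fintype]

set_option maxHeartbeats 1000000 in
/-- Among forecasts of the form `Ŷ = α + λᵀU(S) + βᵀX_S` satisfying the
weak-demographic-parity constraint `cov[Ŷ, U(S)] = 0`, the squared loss is minimized by
the SEO forecast: `β = β_F`, `λ = −Mβ_F`, `α = α_F`, where
`M = var[U(S)]⁻¹ cov[U(S), X_S]`. -/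
theorem stmt13
    {Ω : Type*} [MeasurableSpace Ω] (P : Measure Ω) [IsProbabilityMeasure P]
    (n d : ℕ) (S : Ω → Fin (n + 1)) (hS : Measurable S)
    (X : Ω → Fin d → ℝ) (Y : Ω → ℝ) (ε : Ω → ℝ)
    (p : Fin (n + 1) → ℝ) (μv : Fin (n + 1) → Fin d → ℝ)
    (Sig : Fin (n + 1) → Matrix (Fin d) (Fin d) ℝ)
    (αb : Fin (n + 1) → ℝ) (βb : Fin (n + 1) → Fin d → ℝ)
    (hp : ∀ s, 0 < p s)
    (hmeas : ∀ s, P {ω | S ω = s} = ENNReal.ofReal (p s))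
    (hmean : ∀ s i, ∫ ω in {ω | S ω = s}, X ω i ∂P = p s * μv s i)
    (hcovX : ∀ s i j,
      ∫ ω in {ω | S ω = s}, (X ω i - μv s i) * (X ω j - μv s j) ∂P = p s * Sig s i j)
    (hSigPD : ∀ s, (Sig s).PosDef)
    (hY : ∀ ω, Y ω = αb (S ω) + βb (S ω) ⬝ᵥ X ω + ε ω)
    (hε : ∀ s, ∫ ω in {ω | S ω = s}, ε ω ∂P = 0)
    (hXε : ∀ s i, ∫ ω in {ω | S ω = s}, (X ω i - μv s i) * ε ω ∂P = 0)
    (μbar : Fin d → ℝ) (hμbar : μbar = ∑ s, p s • μv s)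
    -- centered bank dummies
    (U : Fin n → Ω → ℝ)
    (hU : ∀ i ω, U i ω = (if S ω = i.castSucc then 1 else 0) - p i.castSucc)
    (hint : ∀ (a : ℝ) (l : Fin n → ℝ) (b : Fin d → ℝ),
      Integrable (fun ω => (a + (∑ k, l k * U k ω) + b ⬝ᵥ X ω - Y ω) ^ 2) P)
    -- M = var[U(S)]⁻¹ cov[U(S), X_S]
    (VarU : Matrix (Fin n) (Fin n) ℝ)
    (hVarU : ∀ i j, VarU i j =
      (∫ ω, U i ω * U j ω ∂P) - (∫ ω, U i ω ∂P) * (∫ ω, U j ω ∂P))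
    (covUX : Matrix (Fin n) (Fin d) ℝ)
    (hcovUX : ∀ i j, covUX i j =
      (∫ ω, U i ω * X ω j ∂P) - (∫ ω, U i ω ∂P) * (∫ ω, X ω j ∂P))
    (M : Matrix (Fin n) (Fin d) ℝ) (hM : M = VarU⁻¹ * covUX)
    -- FEO coefficient and intercept
    (Vc : Matrix (Fin d) (Fin d) ℝ)
    (hVc : ∀ i j, Vc i j =
      (∫ ω, (X ω i - μv (S ω) i) * (X ω j - μv (S ω) j) ∂P)
        - (∫ ω, (X ω i - μv (S ω) i) ∂P) * (∫ ω, (X ω j - μv (S ω) j) ∂P))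
    (cv : Fin d → ℝ)
    (hcv : ∀ i, cv i =
      (∫ ω, (X ω i - μv (S ω) i) * Y ω ∂P)
        - (∫ ω, (X ω i - μv (S ω) i) ∂P) * (∫ ω, Y ω ∂P))
    (βF : Fin d → ℝ) (hβF : βF = Vc⁻¹ *ᵥ cv)
    (αF : ℝ) (hαF : αF = (∫ ω, Y ω ∂P) - βF ⬝ᵥ μbar)
    (lSEO : Fin n → ℝ) (hlSEO : lSEO = -(M *ᵥ βF)) :
    -- the SEO forecast satisfies the weak demographic parity constraint
    (∀ i, (∫ ω, (αF + (∑ k, lSEO k * U k ω) + βF ⬝ᵥ X ω) * U i ω ∂P)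
        - (∫ ω, (αF + (∑ k, lSEO k * U k ω) + βF ⬝ᵥ X ω) ∂P) * (∫ ω, U i ω ∂P) = 0) ∧
    -- and minimizes the squared loss among all constrained forecasts of this form
    (∀ (a : ℝ) (l : Fin n → ℝ) (b : Fin d → ℝ),
      (∀ i, (∫ ω, (a + (∑ k, l k * U k ω) + b ⬝ᵥ X ω) * U i ω ∂P)
          - (∫ ω, (a + (∑ k, l k * U k ω) + b ⬝ᵥ X ω) ∂P) * (∫ ω, U i ω ∂P) = 0) →
      ∫ ω, (αF + (∑ k, lSEO k * U k ω) + βF ⬝ᵥ X ω - Y ω) ^ 2 ∂P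
        ≤ ∫ ω, (a + (∑ k, l k * U k ω) + b ⬝ᵥ X ω - Y ω) ^ 2 ∂P) := by
  classical
  -- basic facts about the partition
  have hA : ∀ s, MeasurableSet {ω | S ω = s} := fun s => hS (measurableSet_singleton s)
  have hPA : ∀ s, (P {ω | S ω = s}).toReal = p s := fun s => by
    rw [hmeas]; exact ENNReal.toReal_ofReal (hp s).le
  have hsplit : ∀ {f : Ω → ℝ}, Integrable f P →
      ∫ ω, f ω ∂P = ∑ s, ∫ ω in {ω | S ω = s}, f ω ∂P := fun hf => aux_split S hS hf
  have sumP : ∑ s, p s = 1 := by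
    have h1 := hsplit (integrable_const (1 : ℝ))
    simp only [setIntegral_const, smul_eq_mul, mul_one, measureReal_def, Measure.restrict_apply_univ,
      hPA, integral_const, measure_univ, ENNReal.toReal_one, one_smul] at h1
    linarith [h1]
  have sumP' : ∑ k : Fin n, p k.castSucc = 1 - p (Fin.last n) := by
    have := Fin.sum_univ_castSucc (fun s => p s)
    rw [this] at sumP; linarith
  -- measurability
  have measU : ∀ i, Measurable (U i) := by
    intro i
    have : U i = fun ω => (if S ω = i.castSucc then 1 else 0) - p i.castSucc :=
      funext fun ω => hU i ω
    rw [this]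
    exact (Measurable.ite (hA i.castSucc) measurable_const measurable_const).sub
      measurable_const
  have measMu : ∀ j, Measurable (fun ω => μv (S ω) j) := fun j =>
    (measurable_from_top (f := fun s : Fin (n+1) => μv s j)).comp hS
  -- a.e. strong measurability of the data
  have aesmBX : ∀ (b : Fin d → ℝ), AEStronglyMeasurable (fun ω => b ⬝ᵥ X ω - Y ω) P := by
    intro b
    have h1 := (hint 1 0 b).1
    have h0 := (hint 0 0 b).1
    have he : (fun ω => b ⬝ᵥ X ω - Y ω)
        = fun ω => ((1 + (∑ k, (0 : Fin n → ℝ) k * U k ω) + b ⬝ᵥ X ω - Y ω) ^ 2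
          - (0 + (∑ k, (0 : Fin n → ℝ) k * U k ω) + b ⬝ᵥ X ω - Y ω) ^ 2 - 1) * (2:ℝ)⁻¹ := by
      funext ω; simp only [Pi.zero_apply, zero_mul, Finset.sum_const_zero]; ring
    rw [he]
    exact ((h1.sub h0).sub aestronglyMeasurable_const).mul aestronglyMeasurable_const
  have aesmY : AEStronglyMeasurable Y P := by
    have h0 := aesmBX 0
    have he : Y = fun ω => -((0 : Fin d → ℝ) ⬝ᵥ X ω - Y ω) := by
      funext ω; simp
    rw [he]; exact h0.neg
  -- L² memberships
  have memBXY : ∀ b, MemLp (fun ω => b ⬝ᵥ X ω - Y ω) 2 P := by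
    intro b
    rw [memLp_two_iff_integrable_sq (aesmBX b)]
    have := hint 0 0 b
    simpa only [Pi.zero_apply, zero_mul, Finset.sum_const_zero, add_zero, zero_add] using this
  have memY : MemLp Y 2 P := by
    have he : Y = fun ω => -((0 : Fin d → ℝ) ⬝ᵥ X ω - Y ω) := by funext ω; simp
    rw [he]; exact (memBXY 0).neg
  have memX : ∀ j, MemLp (fun ω => X ω j) 2 P := by
    intro j
    have he : (fun ω => X ω j) = fun ω => (Pi.single j 1 ⬝ᵥ X ω - Y ω) + Y ω := by
      funext ω; rw [single_dotProduct]; ring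
    rw [he]; exact (memBXY _).add memY
  have memU : ∀ i, MemLp (U i) 2 P := by
    intro i
    refine MemLp.of_bound (measU i).aestronglyMeasurable (1 + |p i.castSucc|)
      (ae_of_all _ fun ω => ?_)
    rw [hU i ω, Real.norm_eq_abs]
    refine le_trans (abs_sub _ _) (add_le_add ?_ le_rfl)
    split_ifs <;> simp
  have memMu : ∀ j, MemLp (fun ω => μv (S ω) j) 2 P := by
    intro j
    refine MemLp.of_bound (measMu j).aestronglyMeasurable (∑ s, |μv s j|)
      (ae_of_all _ fun ω => ?_)
    rw [Real.norm_eq_abs]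
    exact Finset.single_le_sum (f := fun s => |μv s j|) (fun s _ => abs_nonneg _)
      (Finset.mem_univ (S ω))
  have memXc : ∀ j, MemLp (fun ω => X ω j - μv (S ω) j) 2 P :=
    fun j => (memX j).sub (memMu j)
  have hmubar : ∀ j, μbar j = ∑ s, p s * μv s j := by
    intro j; rw [hμbar]; simp [Finset.sum_apply]
  have hconst : ∀ (s : Fin (n+1)) (c : ℝ), ∫ ω in {ω | S ω = s}, c ∂P = p s * c := by
    intro s c; rw [setIntegral_const, measureReal_def, hPA, smul_eq_mul]
  -- first moments
  have intU : ∀ i, ∫ ω, U i ω ∂P = 0 := by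
    intro i
    rw [hsplit ((memU i).integrable one_le_two)]
    have hterm : ∀ s : Fin (n+1), ∫ ω in {ω | S ω = s}, U i ω ∂P
        = p s * ((if s = i.castSucc then 1 else 0) - p i.castSucc) := by
      intro s
      rw [setIntegral_congr_fun (hA s)
        (g := fun _ => (if s = i.castSucc then 1 else 0) - p i.castSucc)
        (fun ω hω => by
          simp only [Set.mem_setOf_eq] at hω
          rw [hU i ω, hω]), hconst]
    simp only [hterm, mul_sub, Finset.sum_sub_distrib, mul_ite, mul_one, mul_zero,
      Finset.sum_ite_eq', Finset.mem_univ, if_true, ← Finset.sum_mul, sumP, one_mul,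
      sub_self]
  have intUU : ∀ i k, ∫ ω, U i ω * U k ω ∂P =
      (if i = k then p i.castSucc else 0) - p i.castSucc * p k.castSucc := by
    intro i k
    rw [hsplit (aux_mul_int (memU i) (memU k))]
    have hterm : ∀ s : Fin (n+1), ∫ ω in {ω | S ω = s}, U i ω * U k ω ∂P
        = p s * (((if s = i.castSucc then 1 else 0) - p i.castSucc)
            * ((if s = k.castSucc then 1 else 0) - p k.castSucc)) := by
      intro s
      rw [setIntegral_congr_fun (hA s)
        (g := fun _ => ((if s = i.castSucc then 1 else 0) - p i.castSucc)
            * ((if s = k.castSucc then 1 else 0) - p k.castSucc))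
        (fun ω hω => by
          simp only [Set.mem_setOf_eq] at hω
          rw [hU i ω, hU k ω, hω]), hconst]
    have hexp2 : ∀ s : Fin (n+1), p s * (((if s = i.castSucc then 1 else 0) - p i.castSucc)
            * ((if s = k.castSucc then 1 else 0) - p k.castSucc))
        = (if s = i.castSucc then (if s = k.castSucc then p s else 0) else 0)
          - p k.castSucc * (if s = i.castSucc then p s else 0)
          - p i.castSucc * (if s = k.castSucc then p s else 0)
          + (p i.castSucc * p k.castSucc) * p s := by
      intro s; split_ifs <;> ring
    simp only [hterm, hexp2, Finset.sum_add_distrib, Finset.sum_sub_distrib,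
      ← Finset.mul_sum, Finset.sum_ite_eq', Finset.mem_univ, if_true, sumP, mul_one]
    have : (if (i.castSucc : Fin (n+1)) = k.castSucc then p i.castSucc else 0)
        = (if i = k then p i.castSucc else 0) := by
      simp [Fin.castSucc_inj]
    rw [this]; ring
  have intUX : ∀ i j, ∫ ω, U i ω * X ω j ∂P =
      p i.castSucc * (μv i.castSucc j - μbar j) := by
    intro i j
    rw [hsplit (aux_mul_int (memU i) (memX j))]
    have hterm : ∀ s : Fin (n+1), ∫ ω in {ω | S ω = s}, U i ω * X ω j ∂P
        = ((if s = i.castSucc then 1 else 0) - p i.castSucc) * (p s * μv s j) := by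
      intro s
      rw [setIntegral_congr_fun (hA s)
        (g := fun ω => ((if s = i.castSucc then 1 else 0) - p i.castSucc) * X ω j)
        (fun ω hω => by
          simp only [Set.mem_setOf_eq] at hω
          rw [hU i ω, hω]), integral_const_mul, hmean]
    simp only [hterm, sub_mul, ite_mul, one_mul, zero_mul, Finset.sum_sub_distrib,
      Finset.sum_ite_eq', Finset.mem_univ, if_true, ← Finset.mul_sum, ← hmubar j]
    ring
  have intXc : ∀ j, ∫ ω, (X ω j - μv (S ω) j) ∂P = 0 := by
    intro j
    rw [hsplit ((memXc j).integrable one_le_two)]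
    have hterm : ∀ s : Fin (n+1), ∫ ω in {ω | S ω = s}, (X ω j - μv (S ω) j) ∂P = 0 := by
      intro s
      rw [setIntegral_congr_fun (hA s) (g := fun ω => X ω j - μv s j)
        (fun ω hω => by
          simp only [Set.mem_setOf_eq] at hω
          rw [hω]),
        integral_sub ((memX j).integrable one_le_two).integrableOn (integrable_const _),
        hmean]
      have := hconst s (μv s j)
      rw [this]; ring
    simp only [hterm, Finset.sum_const_zero]
  have VcE : ∀ i j, ∫ ω, (X ω i - μv (S ω) i) * (X ω j - μv (S ω) j) ∂P
      = ∑ s, p s * Sig s i j := by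
    intro i j
    rw [hsplit (aux_mul_int (memXc i) (memXc j))]
    refine Finset.sum_congr rfl fun s _ => ?_
    rw [setIntegral_congr_fun (hA s)
      (g := fun ω => (X ω i - μv s i) * (X ω j - μv s j))
      (fun ω hω => by
        simp only [Set.mem_setOf_eq] at hω
        rw [hω]), hcovX]
  -- entries of the matrices
  have VarUE : ∀ i k, VarU i k =
      (if i = k then p i.castSucc else 0) - p i.castSucc * p k.castSucc := by
    intro i k; rw [hVarU, intU, intUU, zero_mul, sub_zero]
  have covUXE : ∀ i j, covUX i j = p i.castSucc * (μv i.castSucc j - μbar j) := by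
    intro i j; rw [hcovUX, intU, intUX, zero_mul, sub_zero]
  have VcEq : ∀ i j, Vc i j = ∫ ω, (X ω i - μv (S ω) i) * (X ω j - μv (S ω) j) ∂P := by
    intro i j; rw [hVc, intXc, zero_mul, sub_zero]
  have cvE : ∀ j, cv j = ∫ ω, (X ω j - μv (S ω) j) * Y ω ∂P := by
    intro j; rw [hcv, intXc, zero_mul, sub_zero]
  -- VarU is invertible
  have hVarUW : VarU * (Matrix.of fun i j : Fin n =>
      (if i = j then (p i.castSucc)⁻¹ else 0) + (p (Fin.last n))⁻¹) = 1 := by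
    have hne : ∀ s, p s ≠ 0 := fun s => (hp s).ne'
    ext i j
    rw [Matrix.mul_apply]
    have hterm : ∀ k : Fin n,
        VarU i k * (Matrix.of (fun i j : Fin n =>
          (if i = j then (p i.castSucc)⁻¹ else 0) + (p (Fin.last n))⁻¹) k j)
        = (if k = i then ((if i = j then 1 else 0) + p i.castSucc * (p (Fin.last n))⁻¹) else 0)
          + (if k = j then -p i.castSucc else 0)
          + (-(p i.castSucc * (p (Fin.last n))⁻¹)) * p k.castSucc := by
      intro k
      rw [VarUE]
      simp only [Matrix.of_apply]
      have hflip : (if i = k then p i.castSucc else 0) = (if k = i then p i.castSucc else 0) := by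
        simp [eq_comm]
      rw [hflip]
      split_ifs <;> subst_vars <;>
        first
        | (exact absurd rfl (by assumption))
        | (field_simp [hne]; try ring)
    rw [Finset.sum_congr rfl fun k _ => hterm k]
    simp only [Finset.sum_add_distrib, Finset.sum_ite_eq', Finset.mem_univ, if_true,
      ← Finset.mul_sum, sumP', Matrix.one_apply]
    by_cases hij : i = j <;> simp only [hij, if_true, if_false, eq_self_iff_true] <;>
      field_simp [hne] <;> ring
  have hdetU : IsUnit VarU.det := Matrix.isUnit_det_of_right_inverse hVarUW
  -- M is the matrix N of within-group mean offsets
  have hsum2 : ∀ j, ∑ k : Fin n, p k.castSucc * (μv k.castSucc j - μv (Fin.last n) j)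
      = μbar j - μv (Fin.last n) j := by
    intro j
    have h1 : ∑ s : Fin (n+1), p s * μv s j
        = ∑ k : Fin n, p k.castSucc * μv k.castSucc j
          + p (Fin.last n) * μv (Fin.last n) j :=
      Fin.sum_univ_castSucc (fun s => p s * μv s j)
    have h2 := hmubar j
    rw [h1] at h2
    simp only [mul_sub, Finset.sum_sub_distrib, ← Finset.sum_mul, sumP']
    linarith
  have hMN : M = Matrix.of fun (k : Fin n) (j : Fin d) =>
      μv k.castSucc j - μv (Fin.last n) j := by
    have hN : covUX = VarU * (Matrix.of fun (k : Fin n) (j : Fin d) =>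
        μv k.castSucc j - μv (Fin.last n) j) := by
      ext i j
      rw [Matrix.mul_apply, covUXE]
      have hterm : ∀ k : Fin n,
          VarU i k * (Matrix.of (fun (k : Fin n) (j : Fin d) =>
            μv k.castSucc j - μv (Fin.last n) j) k j)
          = (if k = i then p i.castSucc * (μv i.castSucc j - μv (Fin.last n) j) else 0)
            - p i.castSucc * (p k.castSucc * (μv k.castSucc j - μv (Fin.last n) j)) := by
        intro k
        rw [VarUE]
        simp only [Matrix.of_apply]
        by_cases h1 : k = i
        · subst h1
          simp only [if_pos rfl, eq_self_iff_true, if_true]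
          ring
        · rw [if_neg (fun h => h1 h.symm), if_neg h1]
          ring
      rw [Finset.sum_congr rfl fun k _ => hterm k]
      simp only [Finset.sum_sub_distrib, Finset.sum_ite_eq', Finset.mem_univ, if_true,
        ← Finset.mul_sum, hsum2]
      ring
    rw [hM, hN, ← Matrix.mul_assoc, Matrix.nonsing_inv_mul _ hdetU, Matrix.one_mul]
  -- the key pointwise identity
  have hstar : ∀ (b : Fin d → ℝ) (ω : Ω),
      ∑ k, (M *ᵥ b) k * U k ω = ∑ j, b j * (μv (S ω) j - μbar j) := by
    intro b ω
    have key : ∀ j, ∑ k : Fin n, (μv k.castSucc j - μv (Fin.last n) j) * U k ω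
        = μv (S ω) j - μbar j := by
      intro j
      have hterm : ∀ k : Fin n,
          (μv k.castSucc j - μv (Fin.last n) j) * U k ω
          = (if S ω = k.castSucc then μv k.castSucc j - μv (Fin.last n) j else 0)
            - p k.castSucc * (μv k.castSucc j - μv (Fin.last n) j) := by
        intro k
        rw [hU k ω]
        split_ifs <;> ring
      rw [Finset.sum_congr rfl fun k _ => hterm k, Finset.sum_sub_distrib, hsum2]
      rcases Fin.eq_castSucc_or_eq_last (S ω) with ⟨m, hm⟩ | hm
      · rw [hm]
        have : ∀ k : Fin n, (if (m.castSucc : Fin (n+1)) = k.castSucc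
            then μv k.castSucc j - μv (Fin.last n) j else 0)
            = (if m = k then μv k.castSucc j - μv (Fin.last n) j else 0) := by
          intro k; simp [Fin.castSucc_inj]
        rw [Finset.sum_congr rfl fun k _ => this k, Finset.sum_ite_eq, if_pos (Finset.mem_univ m)]
        ring
      · rw [hm]
        rw [Finset.sum_eq_zero fun k _ => if_neg ((Fin.castSucc_lt_last k).ne')]
        ring
    calc ∑ k, (M *ᵥ b) k * U k ω
        = ∑ k, ∑ j, (μv k.castSucc j - μv (Fin.last n) j) * b j * U k ω := by
          refine Finset.sum_congr rfl fun k _ => ?_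
          rw [hMN]
          show (Matrix.of _ *ᵥ b) k * U k ω = _
          rw [show ((Matrix.of fun (k : Fin n) (j : Fin d) =>
            μv k.castSucc j - μv (Fin.last n) j) *ᵥ b) k
              = ∑ j, (μv k.castSucc j - μv (Fin.last n) j) * b j from rfl, Finset.sum_mul]
      _ = ∑ j, ∑ k : Fin n, (μv k.castSucc j - μv (Fin.last n) j) * b j * U k ω :=
          Finset.sum_comm
      _ = ∑ j, b j * (μv (S ω) j - μbar j) := by
          refine Finset.sum_congr rfl fun j _ => ?_
          rw [← key j, Finset.mul_sum]
          exact Finset.sum_congr rfl fun k _ => by ring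
  -- Vc is positive definite
  have hsymSig : ∀ s (i j : Fin d), Sig s j i = Sig s i j := by
    intro s i j
    have h := congrFun (congrFun ((hSigPD s).1) i) j
    simpa [Matrix.conjTranspose_apply] using h
  have VcSum : Vc = ∑ s, p s • Sig s := by
    ext i j
    rw [VcEq, VcE]
    simp [Matrix.sum_apply]
  have VcPD : Vc.PosDef := by
    rw [Matrix.posDef_iff_dotProduct_mulVec]
    constructor
    · show Vcᴴ = Vc
      ext i j
      rw [VcSum]
      simp [Matrix.conjTranspose_apply, Matrix.sum_apply, hsymSig]
    · intro x hx
      have hmv : Vc *ᵥ x = ∑ s, p s • (Sig s *ᵥ x) := by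
        funext i
        rw [VcSum]
        simp only [Matrix.mulVec, dotProduct, Matrix.sum_apply, Matrix.smul_apply,
          smul_eq_mul, Finset.sum_mul, Pi.smul_apply, Finset.sum_apply]
        rw [Finset.sum_comm]
        refine Finset.sum_congr rfl fun s _ => ?_
        rw [Finset.mul_sum]
        exact Finset.sum_congr rfl fun k _ => by ring
      have hquad : star x ⬝ᵥ (Vc *ᵥ x) = ∑ s, p s * (star x ⬝ᵥ (Sig s *ᵥ x)) := by
        rw [hmv]
        simp only [dotProduct, Finset.sum_apply, Pi.smul_apply, smul_eq_mul,
          Pi.star_apply, star_trivial, Finset.mul_sum]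
        rw [Finset.sum_comm]
        exact Finset.sum_congr rfl fun s _ => Finset.sum_congr rfl fun k _ => by ring
      rw [hquad]
      exact Finset.sum_pos (fun s _ => mul_pos (hp s) ((hSigPD s).dotProduct_mulVec_pos hx))
        Finset.univ_nonempty
  have hdetVc : IsUnit Vc.det := isUnit_iff_ne_zero.mpr VcPD.det_pos.ne'
  have hVcsymm : ∀ i j, Vc i j = Vc j i := by
    intro i j
    rw [VcEq, VcEq]
    congr 1; funext ω; ring
  have VcβF : Vc *ᵥ βF = cv := by
    rw [hβF, Matrix.mulVec_mulVec, Matrix.mul_nonsing_inv _ hdetVc, Matrix.one_mulVec]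
  -- expansion of the covariance-constraint integrals
  have hexp : ∀ (c : ℝ) (l : Fin n → ℝ) (b : Fin d → ℝ) (i : Fin n),
      ∫ ω, (c + (∑ k, l k * U k ω) + b ⬝ᵥ X ω) * U i ω ∂P
        = (VarU *ᵥ l) i + (covUX *ᵥ b) i := by
    intro c l b i
    have hpt : (fun ω => (c + (∑ k, l k * U k ω) + b ⬝ᵥ X ω) * U i ω)
        = fun ω => (c * U i ω + ∑ k, l k * (U k ω * U i ω))
            + ∑ j, b j * (U i ω * X ω j) := by
      funext ω
      rw [add_mul, add_mul]
      congr 1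
      · congr 1
        rw [Finset.sum_mul]
        exact Finset.sum_congr rfl fun k _ => by ring
      · rw [show b ⬝ᵥ X ω = ∑ j, b j * X ω j from rfl, Finset.sum_mul]
        exact Finset.sum_congr rfl fun j _ => by ring
    have h1 : Integrable (fun ω => c * U i ω) P :=
      ((memU i).integrable one_le_two).const_mul c
    have h2 : Integrable (fun ω => ∑ k, l k * (U k ω * U i ω)) P :=
      integrable_finset_sum _ fun k _ => (aux_mul_int (memU k) (memU i)).const_mul _
    have h3 : Integrable (fun ω => ∑ j, b j * (U i ω * X ω j)) P :=
      integrable_finset_sum _ fun j _ => (aux_mul_int (memU i) (memX j)).const_mul _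
    have h12 : Integrable (fun ω => c * U i ω + ∑ k, l k * (U k ω * U i ω)) P := h1.add h2
    rw [hpt, integral_add h12 h3, integral_add h1 h2,
      integral_finset_sum _ (fun k _ => (aux_mul_int (memU k) (memU i)).const_mul _),
      integral_finset_sum _ (fun j _ => (aux_mul_int (memU i) (memX j)).const_mul _)]
    simp only [integral_const_mul, intU, mul_zero, intUU, intUX, zero_add]
    congr 1
    · show _ = ∑ k, VarU i k * l k
      refine Finset.sum_congr rfl fun k _ => ?_
      rw [VarUE]
      by_cases h : k = i
      · subst h; simp only [if_pos rfl, eq_self_iff_true, if_true]; ring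
      · rw [if_neg h, if_neg (fun hh => h hh.symm)]; ring
    · show _ = ∑ j, covUX i j * b j
      refine Finset.sum_congr rfl fun j _ => ?_
      rw [covUXE]
      ring
  -- part 1: the SEO forecast satisfies the constraint
  have part1 : ∀ i, (∫ ω, (αF + (∑ k, lSEO k * U k ω) + βF ⬝ᵥ X ω) * U i ω ∂P)
      - (∫ ω, (αF + (∑ k, lSEO k * U k ω) + βF ⬝ᵥ X ω) ∂P) * (∫ ω, U i ω ∂P) = 0 := by
    intro i
    rw [intU i, mul_zero, sub_zero, hexp]
    rw [hlSEO, Matrix.mulVec_neg, hM, Matrix.mulVec_mulVec, ← Matrix.mul_assoc,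
      Matrix.mul_nonsing_inv _ hdetU, Matrix.one_mul]
    simp
  refine ⟨part1, ?_⟩
  intro a l b hcon
  -- recover the constraint in matrix form and solve for l
  have hcon' : ∀ i, (VarU *ᵥ l) i + (covUX *ᵥ b) i = 0 := by
    intro i
    have h := hcon i
    rwa [intU i, mul_zero, sub_zero, hexp] at h
  have hVl : VarU *ᵥ l = -(covUX *ᵥ b) := by
    funext i
    have := hcon' i
    simp only [Pi.neg_apply]
    linarith
  have hl : l = -(M *ᵥ b) := by
    have h1 : VarU⁻¹ *ᵥ (VarU *ᵥ l) = l := by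
      rw [Matrix.mulVec_mulVec, Matrix.nonsing_inv_mul _ hdetU, Matrix.one_mulVec]
    rw [← h1, hVl, Matrix.mulVec_neg, Matrix.mulVec_mulVec, ← hM]
  -- pointwise description of any constrained forecast residual
  have hgen : ∀ (a0 : ℝ) (b0 : Fin d → ℝ) (ω : Ω),
      a0 + (∑ k, (-(M *ᵥ b0)) k * U k ω) + b0 ⬝ᵥ X ω - Y ω
        = (a0 + ∑ j, b0 j * μbar j) + (∑ j, b0 j * (X ω j - μv (S ω) j)) - Y ω := by
    intro a0 b0 ω
    have h1 : ∑ k, (-(M *ᵥ b0)) k * U k ω = -∑ j, b0 j * (μv (S ω) j - μbar j) := by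
      rw [← hstar b0 ω, ← Finset.sum_neg_distrib]
      exact Finset.sum_congr rfl fun k _ => by simp only [Pi.neg_apply]; ring
    rw [h1, show b0 ⬝ᵥ X ω = ∑ j, b0 j * X ω j from rfl]
    simp only [mul_sub, Finset.sum_sub_distrib]
    ring
  have hEY2 : ∫ ω, Y ω ∂P = αF + ∑ j, βF j * μbar j := by
    rw [hαF, show βF ⬝ᵥ μbar = ∑ j, βF j * μbar j from rfl]
    ring
  have hFstar : ∀ ω, αF + (∑ k, lSEO k * U k ω) + βF ⬝ᵥ X ω - Y ω
      = (∫ ω', Y ω' ∂P) + (∑ j, βF j * (X ω j - μv (S ω) j)) - Y ω := by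
    intro ω
    rw [hlSEO, hgen αF βF ω, hEY2]
  have hFeq : ∀ ω, a + (∑ k, l k * U k ω) + b ⬝ᵥ X ω - Y ω
      = (αF + (∑ k, lSEO k * U k ω) + βF ⬝ᵥ X ω - Y ω)
        + (((a - αF) + ∑ j, (b j - βF j) * μbar j)
            + ∑ j, (b j - βF j) * (X ω j - μv (S ω) j)) := by
    intro ω
    rw [hl, hgen a b ω, hFstar ω, hEY2]
    simp only [sub_mul, Finset.sum_sub_distrib]
    ring
  -- L² membership of the pieces
  have memXcSum : ∀ (v : Fin d → ℝ),
      MemLp (fun ω => ∑ j, v j * (X ω j - μv (S ω) j)) 2 P :=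
    fun v => memLp_finset_sum _ fun j _ => (memXc j).const_mul (v j)
  have memFstar : MemLp (fun ω => αF + (∑ k, lSEO k * U k ω) + βF ⬝ᵥ X ω - Y ω) 2 P := by
    have he : (fun ω => αF + (∑ k, lSEO k * U k ω) + βF ⬝ᵥ X ω - Y ω)
        = fun ω => ((∫ ω', Y ω' ∂P) + (∑ j, βF j * (X ω j - μv (S ω) j))) - Y ω := by
      funext ω; rw [hFstar ω]
    rw [he]
    exact ((memLp_const (μ := P) (p := 2) (∫ ω', Y ω' ∂P)).add (memXcSum βF)).sub memY
  have memH : MemLp (fun ω => ((a - αF) + ∑ j, (b j - βF j) * μbar j)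
      + ∑ j, (b j - βF j) * (X ω j - μv (S ω) j)) 2 P :=
    (memLp_const (μ := P) (p := 2) ((a - αF) + ∑ j, (b j - βF j) * μbar j)).add (memXcSum _)
  -- the SEO residual has zero mean
  have intFstar : ∫ ω, (αF + (∑ k, lSEO k * U k ω) + βF ⬝ᵥ X ω - Y ω) ∂P = 0 := by
    have he : (fun ω => αF + (∑ k, lSEO k * U k ω) + βF ⬝ᵥ X ω - Y ω)
        = fun ω => ((∫ ω', Y ω' ∂P) + (∑ j, βF j * (X ω j - μv (S ω) j))) - Y ω := by
      funext ω; rw [hFstar ω]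
    have hf1 : Integrable (fun ω => (∫ ω', Y ω' ∂P)
        + ∑ j, βF j * (X ω j - μv (S ω) j)) P :=
      (integrable_const _).add ((memXcSum βF).integrable one_le_two)
    rw [he, integral_sub hf1 (memY.integrable one_le_two),
      integral_add (integrable_const _) ((memXcSum βF).integrable one_le_two),
      integral_finset_sum _
        (fun j _ => (((memXc j).const_mul (βF j)).integrable one_le_two))]
    simp only [integral_const_mul, intXc, mul_zero, Finset.sum_const_zero, add_zero,
      integral_const, measureReal_def, measure_univ, ENNReal.toReal_one, one_smul]
    ring
  -- the SEO residual is orthogonal to each centered covariate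
  have intFXc : ∀ j, ∫ ω, (αF + (∑ k, lSEO k * U k ω) + βF ⬝ᵥ X ω - Y ω)
      * (X ω j - μv (S ω) j) ∂P = 0 := by
    intro j
    have he : (fun ω => (αF + (∑ k, lSEO k * U k ω) + βF ⬝ᵥ X ω - Y ω)
          * (X ω j - μv (S ω) j))
        = fun ω => ((∫ ω', Y ω' ∂P) * (X ω j - μv (S ω) j)
            + ∑ k, βF k * ((X ω k - μv (S ω) k) * (X ω j - μv (S ω) j)))
            - Y ω * (X ω j - μv (S ω) j) := by
      funext ω
      rw [hFstar ω, sub_mul, add_mul, Finset.sum_mul]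
      simp only [mul_assoc]
    have hI1 : Integrable (fun ω => (∫ ω', Y ω' ∂P) * (X ω j - μv (S ω) j)) P :=
      ((memXc j).integrable one_le_two).const_mul _
    have hI2 : Integrable (fun ω => ∑ k, βF k
        * ((X ω k - μv (S ω) k) * (X ω j - μv (S ω) j))) P :=
      integrable_finset_sum _ fun k _ => (aux_mul_int (memXc k) (memXc j)).const_mul _
    have hI3 : Integrable (fun ω => Y ω * (X ω j - μv (S ω) j)) P :=
      aux_mul_int memY (memXc j)
    have hI12 : Integrable (fun ω => (∫ ω', Y ω' ∂P) * (X ω j - μv (S ω) j)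
        + ∑ k, βF k * ((X ω k - μv (S ω) k) * (X ω j - μv (S ω) j))) P := hI1.add hI2
    rw [he, integral_sub hI12 hI3, integral_add hI1 hI2,
      integral_finset_sum _
        (fun k _ => (aux_mul_int (memXc k) (memXc j)).const_mul _)]
    have hYX : ∫ ω, Y ω * (X ω j - μv (S ω) j) ∂P = cv j := by
      rw [cvE]
      congr 1
      funext ω
      ring
    have hVcterm : ∀ k, ∫ ω, (X ω k - μv (S ω) k) * (X ω j - μv (S ω) j) ∂P = Vc k j :=
      fun k => (VcEq k j).symm
    simp only [integral_const_mul, intXc, mul_zero, hVcterm, hYX]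
    have hfin : ∑ k, βF k * Vc k j = cv j := by
      have : ∑ k, βF k * Vc k j = (Vc *ᵥ βF) j := by
        rw [show (Vc *ᵥ βF) j = ∑ k, Vc j k * βF k from rfl]
        exact Finset.sum_congr rfl fun k _ => by rw [hVcsymm k j]; ring
      rw [this, VcβF]
    rw [hfin]
    ring
  -- orthogonality of the SEO residual to the correction term
  have key0 : ∫ ω, (αF + (∑ k, lSEO k * U k ω) + βF ⬝ᵥ X ω - Y ω)
      * (((a - αF) + ∑ j, (b j - βF j) * μbar j)
          + ∑ j, (b j - βF j) * (X ω j - μv (S ω) j)) ∂P = 0 := by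
    have he : (fun ω => (αF + (∑ k, lSEO k * U k ω) + βF ⬝ᵥ X ω - Y ω)
          * (((a - αF) + ∑ j, (b j - βF j) * μbar j)
            + ∑ j, (b j - βF j) * (X ω j - μv (S ω) j)))
        = fun ω => ((a - αF) + ∑ j, (b j - βF j) * μbar j)
              * (αF + (∑ k, lSEO k * U k ω) + βF ⬝ᵥ X ω - Y ω)
            + ∑ j, (b j - βF j) * ((αF + (∑ k, lSEO k * U k ω) + βF ⬝ᵥ X ω - Y ω)
                * (X ω j - μv (S ω) j)) := by
      funext ω
      rw [mul_add, Finset.mul_sum]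
      congr 1
      · ring
      · exact Finset.sum_congr rfl fun j _ => by ring
    have hI1 : Integrable (fun ω => ((a - αF) + ∑ j, (b j - βF j) * μbar j)
        * (αF + (∑ k, lSEO k * U k ω) + βF ⬝ᵥ X ω - Y ω)) P :=
      (memFstar.integrable one_le_two).const_mul _
    have hI2 : Integrable (fun ω => ∑ j, (b j - βF j)
        * ((αF + (∑ k, lSEO k * U k ω) + βF ⬝ᵥ X ω - Y ω)
            * (X ω j - μv (S ω) j))) P :=
      integrable_finset_sum _ fun j _ =>
        (aux_mul_int memFstar (memXc j)).const_mul _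
    rw [he, integral_add hI1 hI2,
      integral_finset_sum _ (fun j _ => (aux_mul_int memFstar (memXc j)).const_mul _)]
    simp only [integral_const_mul, intFstar, intFXc, mul_zero, Finset.sum_const_zero,
      add_zero]
  -- final comparison of the losses
  have hH2 : Integrable (fun ω => (((a - αF) + ∑ j, (b j - βF j) * μbar j)
      + ∑ j, (b j - βF j) * (X ω j - μv (S ω) j)) ^ 2) P := by
    have h := aux_mul_int memH memH
    have he : (fun ω => (((a - αF) + ∑ j, (b j - βF j) * μbar j)
        + ∑ j, (b j - βF j) * (X ω j - μv (S ω) j)) ^ 2)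
        = fun ω => (((a - αF) + ∑ j, (b j - βF j) * μbar j)
            + ∑ j, (b j - βF j) * (X ω j - μv (S ω) j))
          * (((a - αF) + ∑ j, (b j - βF j) * μbar j)
            + ∑ j, (b j - βF j) * (X ω j - μv (S ω) j)) := by
      funext ω; ring
    rw [he]
    exact h
  have hFH : Integrable (fun ω => (αF + (∑ k, lSEO k * U k ω) + βF ⬝ᵥ X ω - Y ω)
      * (((a - αF) + ∑ j, (b j - βF j) * μbar j)
          + ∑ j, (b j - βF j) * (X ω j - μv (S ω) j))) P :=
    aux_mul_int memFstar memH
  have hptF : (fun ω => (a + (∑ k, l k * U k ω) + b ⬝ᵥ X ω - Y ω) ^ 2)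
      = fun ω => (αF + (∑ k, lSEO k * U k ω) + βF ⬝ᵥ X ω - Y ω) ^ 2
          + (2 * ((αF + (∑ k, lSEO k * U k ω) + βF ⬝ᵥ X ω - Y ω)
              * (((a - αF) + ∑ j, (b j - βF j) * μbar j)
                + ∑ j, (b j - βF j) * (X ω j - μv (S ω) j)))
            + (((a - αF) + ∑ j, (b j - βF j) * μbar j)
                + ∑ j, (b j - βF j) * (X ω j - μv (S ω) j)) ^ 2) := by
    funext ω
    rw [hFeq ω]
    ring
  have h23 : Integrable (fun ω =>
      2 * ((αF + (∑ k, lSEO k * U k ω) + βF ⬝ᵥ X ω - Y ω)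
          * (((a - αF) + ∑ j, (b j - βF j) * μbar j)
            + ∑ j, (b j - βF j) * (X ω j - μv (S ω) j)))
        + (((a - αF) + ∑ j, (b j - βF j) * μbar j)
            + ∑ j, (b j - βF j) * (X ω j - μv (S ω) j)) ^ 2) P :=
    (hFH.const_mul 2).add hH2
  rw [hptF, integral_add (hint αF lSEO βF) h23,
    integral_add (hFH.const_mul 2) hH2, integral_const_mul, key0, mul_zero, zero_add]
  have hnn : 0 ≤ ∫ ω, (((a - αF) + ∑ j, (b j - βF j) * μbar j)
      + ∑ j, (b j - βF j) * (X ω j - μv (S ω) j)) ^ 2 ∂P :=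
    integral_nonneg fun ω => sq_nonneg _
  linarith
end

section
/- Let Ŷ_γ(x) = E[Y_S] + (β_F + γ)ᵀ(x − μ̄) for γ ∈ ℝ^d. If E[(Ŷ_γ(X_S) − Y_S)²] < E[(Ŷ_0(X_S) − Y_S)²], then (i) cov[γᵀX_S, δᵀΛᵀX_S] > 0 and (ii) cov[γᵀMᵀU(S), δᵀU(S)] > 0. -/
open MeasureTheory Matrix Finset

namespace Stmt14Aux

variable {Ω : Type*} [MeasurableSpace Ω] {P : Measure Ω}

lemma mulInt {f g : Ω → ℝ} [IsProbabilityMeasure P] (hf : MemLp f 2 P) (hg : MemLp g 2 P) :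
    Integrable (fun ω => f ω * g ω) P := by
  have h1 := (hf.add hg).integrable_sq
  have h2 := hf.integrable_sq
  have h3 := hg.integrable_sq
  have he : (fun ω => f ω * g ω) = fun ω => (((f + g) ω)^2 - f ω^2 - g ω^2)/2 := by
    funext ω; simp only [Pi.add_apply]; ring
  rw [he]
  exact ((h1.sub h2).sub h3).div_const 2

lemma quadZero {q c : ℝ} (hq : 0 ≤ q) (h : ∀ t : ℝ, 0 ≤ t^2*q + 2*t*c) : c = 0 := by
  by_contra hc
  have h1 := h (-(c / (q+1)))
  have hq1 : (0:ℝ) < q + 1 := by linarith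
  have h2 : (0:ℝ) < c^2 := by positivity
  field_simp at h1
  nlinarith [mul_pos (mul_pos h2 hq1) hq1, mul_nonneg h2.le hq]

lemma varIdent {m : ℕ} (p x : Fin m → ℝ) (hsum : ∑ s, p s = 1) :
    ∑ s, p s * (x s - ∑ t, p t * x t)^2 = ∑ s, p s * x s^2 - (∑ s, p s * x s)^2 := by
  have he : ∀ s : Fin m, p s * (x s - ∑ t, p t * x t)^2
      = p s * x s^2 - 2*(∑ t, p t * x t)*(p s * x s) + (∑ t, p t * x t)^2 * p s := by
    intro s; ring
  rw [Finset.sum_congr rfl (fun s _ => he s), Finset.sum_add_distrib, Finset.sum_sub_distrib,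
    ← Finset.mul_sum, ← Finset.mul_sum, hsum]
  ring

lemma partInt {m : ℕ} {S : Ω → Fin m} (hS : Measurable S) {f : Ω → ℝ} (hf : Integrable f P) :
    ∫ ω, f ω ∂P = ∑ s : Fin m, ∫ ω in {ω | S ω = s}, f ω ∂P := by
  have hms : ∀ s : Fin m, MeasurableSet {ω | S ω = s} := fun s => hS (measurableSet_singleton s)
  have hd : Pairwise (Function.onFun Disjoint fun s : Fin m => {ω | S ω = s}) := by
    intro i j hij
    simp only [Function.onFun, Set.disjoint_left, Set.mem_setOf_eq]
    intro ω h1 h2; exact hij (h1.symm.trans h2)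
  have hu : (⋃ s : Fin m, {ω | S ω = s}) = Set.univ := by ext ω; simp
  calc ∫ ω, f ω ∂P = ∫ ω in ⋃ s : Fin m, {ω | S ω = s}, f ω ∂P := by rw [hu, setIntegral_univ]
    _ = ∑' s : Fin m, ∫ ω in {ω | S ω = s}, f ω ∂P :=
        integral_iUnion hms hd (hu ▸ hf.integrableOn)
    _ = _ := tsum_fintype _

def ZB {d n : ℕ} (X : Ω → Fin d → ℝ) (U : Fin n → Ω → ℝ) (Y : Ω → ℝ) :
    (Fin d ⊕ (Fin n ⊕ Bool)) → Ω → ℝ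
  | Sum.inl i => fun ω => X ω i
  | Sum.inr (Sum.inl k) => U k
  | Sum.inr (Sum.inr false) => fun _ => 1
  | Sum.inr (Sum.inr true) => Y

def co {d n : ℕ} (a : ℝ) (b : Fin d → ℝ) (l : Fin n → ℝ) (c : ℝ) : (Fin d ⊕ (Fin n ⊕ Bool)) → ℝ
  | Sum.inl i => b i
  | Sum.inr (Sum.inl k) => l k
  | Sum.inr (Sum.inr false) => a
  | Sum.inr (Sum.inr true) => c

lemma co_sum {d n : ℕ} (X : Ω → Fin d → ℝ) (U : Fin n → Ω → ℝ) (Y : Ω → ℝ)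
    (a : ℝ) (b : Fin d → ℝ) (l : Fin n → ℝ) (c : ℝ) (ω : Ω) :
    (∑ j, co a b l c j * ZB X U Y j ω) = a + b ⬝ᵥ X ω + (∑ k, l k * U k ω) + c * Y ω := by
  rw [Fintype.sum_sum_type, Fintype.sum_sum_type, Fintype.sum_bool]
  simp only [ZB, co, dotProduct]
  ring

lemma integral_combo {d n : ℕ} {X : Ω → Fin d → ℝ} {U : Fin n → Ω → ℝ} {Y : Ω → ℝ}
    [IsProbabilityMeasure P]
    (hZ2 : ∀ j, MemLp (ZB X U Y j) 2 P) (c : (Fin d ⊕ (Fin n ⊕ Bool)) → ℝ) :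
    ∫ ω, (∑ j, c j * ZB X U Y j ω) ∂P = ∑ j, c j * ∫ ω, ZB X U Y j ω ∂P := by
  rw [integral_finset_sum _ (fun j _ => ((hZ2 j).integrable one_le_two).const_mul (c j))]
  exact Finset.sum_congr rfl fun j _ => integral_const_mul _ _

lemma integral_combo_mul {d n : ℕ} {X : Ω → Fin d → ℝ} {U : Fin n → Ω → ℝ} {Y : Ω → ℝ}
    [IsProbabilityMeasure P]
    (hZ2 : ∀ j, MemLp (ZB X U Y j) 2 P) (c c' : (Fin d ⊕ (Fin n ⊕ Bool)) → ℝ) :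
    ∫ ω, (∑ j, c j * ZB X U Y j ω) * (∑ k, c' k * ZB X U Y k ω) ∂P
      = ∑ j, ∑ k, c j * c' k * ∫ ω, ZB X U Y j ω * ZB X U Y k ω ∂P := by
  have he : ∀ ω, (∑ j, c j * ZB X U Y j ω) * (∑ k, c' k * ZB X U Y k ω)
      = ∑ j, ∑ k, c j * c' k * (ZB X U Y j ω * ZB X U Y k ω) := by
    intro ω
    rw [Finset.sum_mul_sum]
    exact Finset.sum_congr rfl fun j _ => Finset.sum_congr rfl fun k _ => by ring
  simp_rw [he]
  rw [integral_finset_sum _ (fun j _ => ?_)]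
  · refine Finset.sum_congr rfl fun j _ => ?_
    rw [integral_finset_sum _ (fun k _ => (mulInt (hZ2 j) (hZ2 k)).const_mul _)]
    exact Finset.sum_congr rfl fun k _ => integral_const_mul _ _
  · exact integrable_finset_sum _ (fun k _ => (mulInt (hZ2 j) (hZ2 k)).const_mul _)

noncomputable def Wm {d n : ℕ} (X : Ω → Fin d → ℝ) (U : Fin n → Ω → ℝ) (Y : Ω → ℝ) (P : Measure Ω)
    (j k : Fin d ⊕ (Fin n ⊕ Bool)) : ℝ :=
  ∫ ω, ZB X U Y j ω * ZB X U Y k ω ∂P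

noncomputable def Qm {d n : ℕ} (X : Ω → Fin d → ℝ) (U : Fin n → Ω → ℝ) (Y : Ω → ℝ) (P : Measure Ω)
    (c c' : Fin d ⊕ (Fin n ⊕ Bool) → ℝ) : ℝ :=
  ∑ j, ∑ k, c j * c' k * Wm X U Y P j k

variable {d n : ℕ} {X : Ω → Fin d → ℝ} {U : Fin n → Ω → ℝ} {Y : Ω → ℝ} {P : Measure Ω}

lemma Wm_symm (j k : Fin d ⊕ (Fin n ⊕ Bool)) : Wm X U Y P j k = Wm X U Y P k j :=
  integral_congr_ae (Filter.Eventually.of_forall fun ω => mul_comm _ _)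

lemma Qm_eq [IsProbabilityMeasure P] (hZ2 : ∀ j, MemLp (ZB X U Y j) 2 P)
    (c c' : Fin d ⊕ (Fin n ⊕ Bool) → ℝ) :
    ∫ ω, (∑ j, c j * ZB X U Y j ω) * (∑ k, c' k * ZB X U Y k ω) ∂P = Qm X U Y P c c' := by
  rw [integral_combo_mul hZ2 c c']; rfl

lemma Qm_nonneg [IsProbabilityMeasure P] (hZ2 : ∀ j, MemLp (ZB X U Y j) 2 P)
    (c : Fin d ⊕ (Fin n ⊕ Bool) → ℝ) : 0 ≤ Qm X U Y P c c := by
  rw [← Qm_eq hZ2]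
  exact integral_nonneg fun ω => mul_self_nonneg _

lemma Qm_symm (u v : Fin d ⊕ (Fin n ⊕ Bool) → ℝ) : Qm X U Y P u v = Qm X U Y P v u := by
  unfold Qm
  rw [Finset.sum_comm]
  refine Finset.sum_congr rfl fun j _ => Finset.sum_congr rfl fun k _ => ?_
  rw [Wm_symm]; ring

lemma Qm_expand (c e : Fin d ⊕ (Fin n ⊕ Bool) → ℝ) (t : ℝ) :
    Qm X U Y P (fun j => c j + t * e j) (fun j => c j + t * e j)
      = Qm X U Y P c c + 2*t*Qm X U Y P c e + t^2 * Qm X U Y P e e := by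
  have h : ∀ j k : Fin d ⊕ (Fin n ⊕ Bool), (c j + t * e j) * (c k + t * e k) * Wm X U Y P j k
      = c j * c k * Wm X U Y P j k + t * (c j * e k * Wm X U Y P j k)
        + t * (e j * c k * Wm X U Y P j k) + t^2 * (e j * e k * Wm X U Y P j k) :=
    fun j k => by ring
  unfold Qm
  rw [Finset.sum_congr rfl fun j _ => Finset.sum_congr rfl fun k _ => h j k]
  simp only [Finset.sum_add_distrib, ← Finset.mul_sum]
  have hsym : ∑ j, ∑ k, e j * c k * Wm X U Y P j k = ∑ j, ∑ k, c j * e k * Wm X U Y P j k :=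
    Qm_symm e c
  rw [hsym]; ring

lemma Qm_eval (c c' : Fin d ⊕ (Fin n ⊕ Bool) → ℝ) :
    Qm X U Y P c c' = ∑ j, c j * ∑ k, c' k * Wm X U Y P j k := by
  unfold Qm
  refine Finset.sum_congr rfl fun j _ => ?_
  rw [Finset.mul_sum]
  exact Finset.sum_congr rfl fun k _ => by ring

lemma sum_co {d n : ℕ} (a : ℝ) (b : Fin d → ℝ) (l : Fin n → ℝ) (c : ℝ)
    (v : Fin d ⊕ (Fin n ⊕ Bool) → ℝ) :
    ∑ j, co a b l c j * v j
      = (∑ i, b i * v (Sum.inl i)) + (∑ k, l k * v (Sum.inr (Sum.inl k)))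
        + a * v (Sum.inr (Sum.inr false)) + c * v (Sum.inr (Sum.inr true)) := by
  rw [Fintype.sum_sum_type, Fintype.sum_sum_type, Fintype.sum_bool]
  simp only [co]
  ring

lemma co_add_smul {d n : ℕ} (a a' t : ℝ) (b b' : Fin d → ℝ) (l l' : Fin n → ℝ) (c c' : ℝ) :
    (fun j => co a b l c j + t * co a' b' l' c' j)
      = co (a + t*a') (fun i => b i + t * b' i) (fun k => l k + t * l' k) (c + t*c') := by
  funext j
  rcases j with i | k | b2
  · simp [co]
  · simp [co]
  · cases b2 <;> simp [co]

lemma Qm_smul_add_left {d n : ℕ} {X : Ω → Fin d → ℝ} {U : Fin n → Ω → ℝ} {Y : Ω → ℝ}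
    {P : Measure Ω} (u v w : Fin d ⊕ (Fin n ⊕ Bool) → ℝ) (t : ℝ) :
    Qm X U Y P (fun j => u j + t * v j) w = Qm X U Y P u w + t * Qm X U Y P v w := by
  unfold Qm
  have h : ∀ j k : Fin d ⊕ (Fin n ⊕ Bool), (u j + t * v j) * w k * Wm X U Y P j k
      = u j * w k * Wm X U Y P j k + t * (v j * w k * Wm X U Y P j k) := fun j k => by ring
  rw [Finset.sum_congr rfl fun j _ => Finset.sum_congr rfl fun k _ => h j k]
  simp only [Finset.sum_add_distrib, ← Finset.mul_sum]



lemma m1 {d m : ℕ} (x : Fin d → ℝ) (q : Fin m → ℝ) (G : Fin m → Fin d → Fin d → ℝ) :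
    ∑ i, x i * (∑ j, (∑ s, q s * G s i j) * x j)
      = ∑ s, q s * (∑ i, x i * (∑ j, G s i j * x j)) := by
  have e1 : ∀ i, x i * (∑ j, (∑ s, q s * G s i j) * x j)
      = ∑ j, ∑ s, x i * (q s * G s i j * x j) := by
    intro i
    rw [Finset.mul_sum]
    refine Finset.sum_congr rfl fun j _ => ?_
    rw [Finset.sum_mul, Finset.mul_sum]
  rw [Finset.sum_congr rfl fun i _ => e1 i,
    Finset.sum_congr rfl fun i _ => Finset.sum_comm, Finset.sum_comm]
  refine Finset.sum_congr rfl fun s _ => ?_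
  rw [Finset.mul_sum]
  refine Finset.sum_congr rfl fun i _ => ?_
  conv_rhs => rw [Finset.mul_sum, Finset.mul_sum]
  exact Finset.sum_congr rfl fun j _ => by ring

lemma m2 {d : ℕ} (x B : Fin d → ℝ) :
    ∑ i, x i * (∑ j, (B i * B j) * x j) = (∑ i, x i * B i)^2 := by
  rw [sq, Finset.sum_mul_sum]
  refine Finset.sum_congr rfl fun i _ => ?_
  rw [Finset.mul_sum]
  exact Finset.sum_congr rfl fun j _ => by ring

lemma quadShuffle {d m : ℕ} (x : Fin d → ℝ) (q : Fin m → ℝ)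
    (Sg : Fin m → Matrix (Fin d) (Fin d) ℝ) (w : Fin m → Fin d → ℝ) :
    ∑ i, x i * (∑ j, ((∑ s, q s * (Sg s i j + w s i * w s j))
        - (∑ s, q s * w s i) * (∑ s, q s * w s j)) * x j)
      = (∑ s, q s * (∑ i, x i * (∑ j, Sg s i j * x j)))
        + ((∑ s, q s * (∑ i, x i * w s i)^2) - (∑ s, q s * (∑ i, x i * w s i))^2) := by
  have split : ∀ i, x i * (∑ j, ((∑ s, q s * (Sg s i j + w s i * w s j))
        - (∑ s, q s * w s i) * (∑ s, q s * w s j)) * x j)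
      = x i * (∑ j, (∑ s, q s * (Sg s i j + w s i * w s j)) * x j)
        - x i * (∑ j, ((∑ s, q s * w s i) * (∑ s, q s * w s j)) * x j) := by
    intro i
    rw [← mul_sub, ← Finset.sum_sub_distrib]
    congr 1
    exact Finset.sum_congr rfl fun j _ => by ring
  rw [Finset.sum_congr rfl fun i _ => split i, Finset.sum_sub_distrib]
  have hA : ∑ i, x i * (∑ j, (∑ s, q s * (Sg s i j + w s i * w s j)) * x j)
      = (∑ s, q s * (∑ i, x i * (∑ j, Sg s i j * x j)))
        + (∑ s, q s * (∑ i, x i * w s i)^2) := by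
    rw [m1 x q (fun s i j => Sg s i j + w s i * w s j), ← Finset.sum_add_distrib]
    refine Finset.sum_congr rfl fun s _ => ?_
    rw [← mul_add]
    congr 1
    rw [← m2 x (w s), ← Finset.sum_add_distrib]
    refine Finset.sum_congr rfl fun i _ => ?_
    rw [← mul_add, ← Finset.sum_add_distrib]
    congr 1
    exact Finset.sum_congr rfl fun j _ => by ring
  have hB : ∑ i, x i * (∑ j, ((∑ s, q s * w s i) * (∑ s, q s * w s j)) * x j)
      = (∑ s, q s * (∑ i, x i * w s i))^2 := by
    rw [m2 x (fun i => ∑ s, q s * w s i)]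
    congr 1
    have e : ∀ i, x i * (∑ s, q s * w s i) = ∑ s, q s * (x i * w s i) := by
      intro i
      rw [Finset.mul_sum]
      exact Finset.sum_congr rfl fun s _ => by ring
    rw [Finset.sum_congr rfl fun i _ => e i, Finset.sum_comm]
    exact Finset.sum_congr rfl fun s _ => (Finset.mul_sum _ _ _).symm
  rw [hA, hB]
  ring

end Stmt14Aux


open Stmt14Aux in
/-- Let `Ŷ_γ(x) = E[Y_S] + (β_F + γ)ᵀ(x − μ̄)`. If `γ` strictly reduces the mean squared
error relative to `γ = 0`, then it misdirects legitimate information: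
(i) `cov[γᵀX_S, δᵀΛᵀX_S] > 0` and (ii) `cov[γᵀMᵀU(S), δᵀU(S)] > 0`. -/
theorem stmt14
    {Ω : Type*} [MeasurableSpace Ω] (P : Measure Ω) [IsProbabilityMeasure P]
    (n d : ℕ) (S : Ω → Fin (n + 1)) (hS : Measurable S)
    (X : Ω → Fin d → ℝ) (Y : Ω → ℝ) (ε : Ω → ℝ)
    (p : Fin (n + 1) → ℝ) (μv : Fin (n + 1) → Fin d → ℝ)
    (Sig : Fin (n + 1) → Matrix (Fin d) (Fin d) ℝ)
    (αb : Fin (n + 1) → ℝ) (βb : Fin (n + 1) → Fin d → ℝ)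
    (hp : ∀ s, 0 < p s)
    (hmeas : ∀ s, P {ω | S ω = s} = ENNReal.ofReal (p s))
    (hmean : ∀ s i, ∫ ω in {ω | S ω = s}, X ω i ∂P = p s * μv s i)
    (hcovX : ∀ s i j,
      ∫ ω in {ω | S ω = s}, (X ω i - μv s i) * (X ω j - μv s j) ∂P = p s * Sig s i j)
    (hSigPD : ∀ s, (Sig s).PosDef)
    (hY : ∀ ω, Y ω = αb (S ω) + βb (S ω) ⬝ᵥ X ω + ε ω)
    (hε : ∀ s, ∫ ω in {ω | S ω = s}, ε ω ∂P = 0)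
    (hXε : ∀ s i, ∫ ω in {ω | S ω = s}, (X ω i - μv s i) * ε ω ∂P = 0)
    (μbar : Fin d → ℝ) (hμbar : μbar = ∑ s, p s • μv s)
    -- centered bank dummies
    (U : Fin n → Ω → ℝ)
    (hU : ∀ i ω, U i ω = (if S ω = i.castSucc then 1 else 0) - p i.castSucc)
    (hint : ∀ (a : ℝ) (l : Fin n → ℝ) (b : Fin d → ℝ),
      Integrable (fun ω => (a + (∑ k, l k * U k ω) + b ⬝ᵥ X ω - Y ω) ^ 2) P)
    -- Λ = var[X_S]⁻¹ cov[X_S, U(S)] and M = var[U(S)]⁻¹ cov[U(S), X_S]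
    (VarX : Matrix (Fin d) (Fin d) ℝ)
    (hVarX : ∀ i j, VarX i j =
      (∫ ω, X ω i * X ω j ∂P) - (∫ ω, X ω i ∂P) * (∫ ω, X ω j ∂P))
    (covXU : Matrix (Fin d) (Fin n) ℝ)
    (hcovXU : ∀ i k, covXU i k =
      (∫ ω, X ω i * U k ω ∂P) - (∫ ω, X ω i ∂P) * (∫ ω, U k ω ∂P))
    (Λ : Matrix (Fin d) (Fin n) ℝ) (hΛ : Λ = VarX⁻¹ * covXU)
    (VarU : Matrix (Fin n) (Fin n) ℝ)
    (hVarU : ∀ i j, VarU i j =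
      (∫ ω, U i ω * U j ω ∂P) - (∫ ω, U i ω ∂P) * (∫ ω, U j ω ∂P))
    (M : Matrix (Fin n) (Fin d) ℝ) (hM : M = VarU⁻¹ * covXUᵀ)
    -- (α_F, δ, β_F): the least-squares projection of Y_S onto {1, U(S), X_S}
    (αF : ℝ) (δ : Fin n → ℝ) (βF : Fin d → ℝ)
    (hproj : ∀ (a : ℝ) (l : Fin n → ℝ) (b : Fin d → ℝ),
      ∫ ω, (αF + (∑ k, δ k * U k ω) + βF ⬝ᵥ X ω - Y ω) ^ 2 ∂P
        ≤ ∫ ω, (a + (∑ k, l k * U k ω) + b ⬝ᵥ X ω - Y ω) ^ 2 ∂P)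
    (γ : Fin d → ℝ)
    -- Ŷ_γ reduces the mean squared error relative to Ŷ_0
    (hless :
      ∫ ω, ((∫ ω', Y ω' ∂P) + (βF + γ) ⬝ᵥ (X ω - μbar) - Y ω) ^ 2 ∂P
        < ∫ ω, ((∫ ω', Y ω' ∂P) + βF ⬝ᵥ (X ω - μbar) - Y ω) ^ 2 ∂P) :
    -- (i) cov[γᵀX_S, δᵀΛᵀX_S] > 0
    (0 < (∫ ω, (γ ⬝ᵥ X ω) * ((Λ *ᵥ δ) ⬝ᵥ X ω) ∂P)
        - (∫ ω, γ ⬝ᵥ X ω ∂P) * (∫ ω, (Λ *ᵥ δ) ⬝ᵥ X ω ∂P)) ∧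
    -- (ii) cov[γᵀMᵀU(S), δᵀU(S)] > 0
    (0 < (∫ ω, ((M *ᵥ γ) ⬝ᵥ fun k => U k ω) * (δ ⬝ᵥ fun k => U k ω) ∂P)
        - (∫ ω, ((M *ᵥ γ) ⬝ᵥ fun k => U k ω) ∂P) * (∫ ω, (δ ⬝ᵥ fun k => U k ω) ∂P)) := by
  classical
  -- basic partition facts
  have hpart : ∀ f : Ω → ℝ, Integrable f P →
      ∫ ω, f ω ∂P = ∑ s : Fin (n+1), ∫ ω in {ω | S ω = s}, f ω ∂P :=
    fun f hf => partInt hS hf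
  have psum : ∑ s, p s = 1 := by
    have hms : ∀ s : Fin (n+1), MeasurableSet {ω | S ω = s} :=
      fun s => hS (measurableSet_singleton s)
    have hd : Pairwise (Function.onFun Disjoint fun s : Fin (n+1) => {ω | S ω = s}) := by
      intro i j hij
      simp only [Function.onFun, Set.disjoint_left, Set.mem_setOf_eq]
      intro ω h1 h2; exact hij (h1.symm.trans h2)
    have hu : (⋃ s : Fin (n+1), {ω | S ω = s}) = Set.univ := by ext ω; simp
    have h1 : (1 : ENNReal) = ∑ s : Fin (n+1), ENNReal.ofReal (p s) := by
      rw [← measure_univ (μ := P), ← hu, measure_iUnion hd hms, tsum_fintype]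
      exact Finset.sum_congr rfl fun s _ => hmeas s
    rw [← ENNReal.ofReal_sum_of_nonneg (fun s _ => (hp s).le)] at h1
    have := ENNReal.ofReal_eq_one.mp h1.symm
    linarith
  -- L² membership of X, U, Y
  have hG2 : ∀ b : Fin d → ℝ, Integrable (fun ω => (b ⬝ᵥ X ω - Y ω)^2) P := by
    intro b
    have h := hint 0 0 b
    simpa using h
  have hG1 : ∀ b : Fin d → ℝ, Integrable (fun ω => b ⬝ᵥ X ω - Y ω) P := by
    intro b
    have h1 : Integrable (fun ω => (1 + (b ⬝ᵥ X ω - Y ω))^2) P := by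
      have h := hint 1 0 b
      simp only [Pi.zero_apply, zero_mul, Finset.sum_const_zero, add_zero] at h
      have he : (fun ω => ((1:ℝ) + b ⬝ᵥ X ω - Y ω)^2)
          = fun ω => (1 + (b ⬝ᵥ X ω - Y ω))^2 := by
        funext ω; ring
      rwa [he] at h
    have he : (fun ω => b ⬝ᵥ X ω - Y ω)
        = fun ω => ((1 + (b ⬝ᵥ X ω - Y ω))^2 - (b ⬝ᵥ X ω - Y ω)^2 - 1)/2 := by
      funext ω; ring
    rw [he]
    exact (((h1.sub (hG2 b)).sub (integrable_const 1)).div_const 2)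
  have hGm : ∀ b : Fin d → ℝ, MemLp (fun ω => b ⬝ᵥ X ω - Y ω) 2 P := fun b =>
    (memLp_two_iff_integrable_sq (hG1 b).aestronglyMeasurable).mpr (hG2 b)
  have hY2 : MemLp Y 2 P := by
    have he : Y = -fun ω => 0 ⬝ᵥ X ω - Y ω := by funext ω; simp
    rw [he]; exact (hGm 0).neg
  have hX2 : ∀ i, MemLp (fun ω => X ω i) 2 P := by
    intro i
    have h := (hGm (Pi.single i 1)).sub (hGm 0)
    have he : ((fun ω => Pi.single i 1 ⬝ᵥ X ω - Y ω) - (fun ω => 0 ⬝ᵥ X ω - Y ω))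
        = fun ω => X ω i := by
      funext ω
      simp [dotProduct, Pi.single_apply, ite_mul, Finset.sum_ite_eq']
    rwa [he] at h
  have hU2 : ∀ k, MemLp (U k) 2 P := by
    intro k
    have heq : U k = fun ω => (if S ω = k.castSucc then (1:ℝ) else 0) - p k.castSucc :=
      funext (hU k)
    rw [heq]
    have hm : Measurable fun ω => (if S ω = k.castSucc then (1:ℝ) else 0) - p k.castSucc :=
      (Measurable.ite (hS (measurableSet_singleton _)) measurable_const measurable_const).sub
        measurable_const
    refine MemLp.of_bound hm.aestronglyMeasurable (1 + |p k.castSucc|) ?_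
    filter_upwards with ω
    rw [Real.norm_eq_abs]
    refine (abs_sub _ _).trans ?_
    have h1 : |(if S ω = k.castSucc then (1:ℝ) else 0)| ≤ 1 := by split_ifs <;> simp
    exact add_le_add_left h1 _
  have hZ2 : ∀ j, MemLp (ZB X U Y j) 2 P := by
    rintro (i | k | b)
    · exact hX2 i
    · exact hU2 k
    · cases b
      · exact memLp_const 1
      · exact hY2
  have hms : ∀ s : Fin (n+1), MeasurableSet {ω | S ω = s} :=
    fun s => hS (measurableSet_singleton s)
  have hptoReal : ∀ s, (P {ω | S ω = s}).toReal = p s := by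
    intro s; rw [hmeas, ENNReal.toReal_ofReal (hp s).le]
  -- E[U k] = 0
  have hUA : ∀ (s : Fin (n+1)) (k : Fin n), ∫ ω in {ω | S ω = s}, U k ω ∂P
      = p s * ((if s = k.castSucc then 1 else 0) - p k.castSucc) := by
    intro s k
    rw [setIntegral_congr_fun (hms s)
      (g := fun _ => (if s = k.castSucc then (1:ℝ) else 0) - p k.castSucc)
      (fun ω hω => by rw [hU k ω, Set.mem_setOf_eq.mp hω])]
    rw [setIntegral_const, smul_eq_mul, measureReal_def, hptoReal]
  have hEU : ∀ k, ∫ ω, U k ω ∂P = 0 := by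
    intro k
    rw [hpart _ ((hU2 k).integrable one_le_two)]
    simp_rw [hUA]
    have he : ∀ s : Fin (n+1), p s * ((if s = k.castSucc then 1 else 0) - p k.castSucc)
        = (if s = k.castSucc then p s else 0) - p s * p k.castSucc := by
      intro s; split_ifs <;> ring
    rw [Finset.sum_congr rfl fun s _ => he s, Finset.sum_sub_distrib,
      Finset.sum_ite_eq' Finset.univ k.castSucc p, ← Finset.sum_mul, psum]
    simp
  -- E[U k * U l]
  have hUUA : ∀ (s : Fin (n+1)) (k l : Fin n), ∫ ω in {ω | S ω = s}, U k ω * U l ω ∂P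
      = p s * (((if s = k.castSucc then 1 else 0) - p k.castSucc)
          * ((if s = l.castSucc then 1 else 0) - p l.castSucc)) := by
    intro s k l
    rw [setIntegral_congr_fun (hms s)
      (g := fun _ => ((if s = k.castSucc then (1:ℝ) else 0) - p k.castSucc)
          * ((if s = l.castSucc then (1:ℝ) else 0) - p l.castSucc))
      (fun ω hω => by rw [hU k ω, hU l ω, Set.mem_setOf_eq.mp hω])]
    rw [setIntegral_const, smul_eq_mul, measureReal_def, hptoReal]
  have hEUU : ∀ k l, ∫ ω, U k ω * U l ω ∂P
      = (if k = l then p k.castSucc else 0) - p k.castSucc * p l.castSucc := by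
    intro k l
    rw [hpart _ (mulInt (hU2 k) (hU2 l))]
    simp_rw [hUUA]
    have he : ∀ s : Fin (n+1), p s * (((if s = k.castSucc then 1 else 0) - p k.castSucc)
          * ((if s = l.castSucc then 1 else 0) - p l.castSucc))
        = (if s = k.castSucc then (if s = l.castSucc then p s else 0) else 0)
          - p k.castSucc * (if s = l.castSucc then p s else 0)
          - p l.castSucc * (if s = k.castSucc then p s else 0)
          + (p k.castSucc * p l.castSucc) * p s := by
      intro s; split_ifs <;> ring
    rw [Finset.sum_congr rfl fun s _ => he s]
    rw [Finset.sum_add_distrib, Finset.sum_sub_distrib, Finset.sum_sub_distrib,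
      Finset.sum_ite_eq' Finset.univ k.castSucc, ← Finset.mul_sum, ← Finset.mul_sum,
      Finset.sum_ite_eq' Finset.univ l.castSucc p, Finset.sum_ite_eq' Finset.univ k.castSucc p,
      ← Finset.mul_sum, psum]
    simp only [Finset.mem_univ, if_true, Fin.castSucc_inj]
    split_ifs with h
    · subst h; ring
    · ring
  -- E[X i] = μbar i
  have hEX : ∀ i, ∫ ω, X ω i ∂P = μbar i := by
    intro i
    rw [hpart _ ((hX2 i).integrable one_le_two)]
    simp_rw [hmean, hμbar]
    simp [Finset.sum_apply, Pi.smul_apply, smul_eq_mul]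
  -- E[X i * X j]
  have hSXXA : ∀ (s : Fin (n+1)) (i j : Fin d), ∫ ω in {ω | S ω = s}, X ω i * X ω j ∂P
      = p s * (Sig s i j + μv s i * μv s j) := by
    intro s i j
    have e1 : ∫ ω in {ω | S ω = s}, X ω i * X ω j ∂P
        = ∫ ω in {ω | S ω = s}, ((X ω i - μv s i) * (X ω j - μv s j)
            + (μv s j * X ω i + μv s i * X ω j) - μv s i * μv s j) ∂P :=
      setIntegral_congr_fun (hms s) (fun ω _ => by ring)
    have hIa : IntegrableOn (fun ω => (X ω i - μv s i) * (X ω j - μv s j)) {ω | S ω = s} P :=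
      (mulInt ((hX2 i).sub (memLp_const _)) ((hX2 j).sub (memLp_const _))).integrableOn
    have hIb : IntegrableOn (fun ω => μv s j * X ω i + μv s i * X ω j) {ω | S ω = s} P :=
      ((((hX2 i).integrable one_le_two).const_mul _).add
        (((hX2 j).integrable one_le_two).const_mul _)).integrableOn
    have hIab : IntegrableOn (fun ω => (X ω i - μv s i) * (X ω j - μv s j)
        + (μv s j * X ω i + μv s i * X ω j)) {ω | S ω = s} P := hIa.add hIb
    have hIb1 : IntegrableOn (fun ω => μv s j * X ω i) {ω | S ω = s} P :=
      (((hX2 i).integrable one_le_two).const_mul _).integrableOn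
    have hIb2 : IntegrableOn (fun ω => μv s i * X ω j) {ω | S ω = s} P :=
      (((hX2 j).integrable one_le_two).const_mul _).integrableOn
    rw [e1, integral_sub hIab (integrable_const _), integral_add hIa hIb,
      integral_add hIb1 hIb2,
      integral_const_mul, integral_const_mul, hcovX s i j, hmean s i, hmean s j,
      setIntegral_const, smul_eq_mul, measureReal_def, hptoReal]
    ring
  have hSXX : ∀ i j, ∫ ω, X ω i * X ω j ∂P
      = ∑ s, p s * (Sig s i j + μv s i * μv s j) := by
    intro i j
    rw [hpart _ (mulInt (hX2 i) (hX2 j))]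
    exact Finset.sum_congr rfl fun s _ => hSXXA s i j
  -- Q machinery
  have hQeq := Qm_eq (P := P) hZ2
  have hQnn := Qm_nonneg (P := P) hZ2
  have hLmin : ∫ ω, (αF + (∑ k, δ k * U k ω) + βF ⬝ᵥ X ω - Y ω)^2 ∂P
      = Qm X U Y P (co αF βF δ (-1)) (co αF βF δ (-1)) := by
    rw [← hQeq]
    refine integral_congr_ae (Filter.Eventually.of_forall fun ω => ?_)
    simp only [co_sum]
    ring
  have horth : ∀ e : Fin d ⊕ (Fin n ⊕ Bool) → ℝ,
      (∀ t : ℝ, ∫ ω, (αF + (∑ k, δ k * U k ω) + βF ⬝ᵥ X ω - Y ω)^2 ∂P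
        ≤ Qm X U Y P (fun j => co αF βF δ (-1) j + t * e j)
            (fun j => co αF βF δ (-1) j + t * e j)) →
      Qm X U Y P (co αF βF δ (-1)) e = 0 := by
    intro e h
    refine quadZero (hQnn e) fun t => ?_
    have h2 := h t
    rw [hLmin, Qm_expand] at h2
    linarith
  have horth1 : Qm X U Y P (co αF βF δ (-1)) (co 1 0 0 0) = 0 := by
    refine horth _ fun t => ?_
    have hco : (fun j => co αF βF δ (-1) j + t * co (1:ℝ) (0 : Fin d → ℝ) (0 : Fin n → ℝ) 0 j)
        = co (αF + t) βF δ (-1) := by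
      funext j
      rcases j with i | k | b2
      · simp [co]
      · simp [co]
      · cases b2 <;> simp [co]
    rw [hco, ← hQeq]
    refine (hproj (αF + t) δ βF).trans (le_of_eq ?_)
    refine integral_congr_ae (Filter.Eventually.of_forall fun ω => ?_)
    simp only [co_sum]
    ring
  have horthX : ∀ i : Fin d,
      Qm X U Y P (co αF βF δ (-1)) (co 0 (Pi.single i 1) 0 0) = 0 := by
    intro i
    refine horth _ fun t => ?_
    have hco : (fun j => co αF βF δ (-1) j + t * co (0:ℝ) (Pi.single i 1) (0 : Fin n → ℝ) 0 j)
        = co αF (βF + Pi.single i t) δ (-1) := by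
      funext j
      rcases j with i' | k | b2
      · simp only [co, Pi.add_apply, Pi.single_apply]
        split_ifs <;> ring
      · simp [co]
      · cases b2 <;> simp [co]
    rw [hco, ← hQeq]
    refine (hproj αF δ (βF + Pi.single i t)).trans (le_of_eq ?_)
    refine integral_congr_ae (Filter.Eventually.of_forall fun ω => ?_)
    simp only [co_sum]
    ring
  -- orthogonality in residual-moment form
  have hRc : (∑ k, co αF βF δ (-1) k * Wm X U Y P (Sum.inr (Sum.inr false)) k) = 0 := by
    have h := horth1
    rw [Qm_symm, Qm_eval, sum_co] at h
    simpa using h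
  have hRX : ∀ i : Fin d,
      (∑ k, co αF βF δ (-1) k * Wm X U Y P (Sum.inl i) k) = 0 := by
    intro i
    have h := horthX i
    rw [Qm_symm, Qm_eval, sum_co] at h
    simpa [Pi.single_apply, ite_mul, Finset.sum_ite_eq'] using h
  -- second-moment matrix values
  have hW_cc : Wm X U Y P (Sum.inr (Sum.inr false)) (Sum.inr (Sum.inr false)) = 1 := by
    simp [Wm, ZB]
  have hW_Xc : ∀ i, Wm X U Y P (Sum.inl i) (Sum.inr (Sum.inr false)) = μbar i := by
    intro i; simpa [Wm, ZB] using hEX i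
  have hW_cX : ∀ i, Wm X U Y P (Sum.inr (Sum.inr false)) (Sum.inl i) = μbar i :=
    fun i => (Wm_symm _ _).trans (hW_Xc i)
  have hW_Uc : ∀ k, Wm X U Y P (Sum.inr (Sum.inl k)) (Sum.inr (Sum.inr false)) = 0 := by
    intro k; simpa [Wm, ZB] using hEU k
  have hW_cU : ∀ k, Wm X U Y P (Sum.inr (Sum.inr false)) (Sum.inr (Sum.inl k)) = 0 :=
    fun k => (Wm_symm _ _).trans (hW_Uc k)
  have hW_XX : ∀ i j, Wm X U Y P (Sum.inl i) (Sum.inl j) = VarX i j + μbar i * μbar j := by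
    intro i j; simp only [Wm, ZB]; rw [hVarX i j, hEX, hEX]; ring
  have hW_XU : ∀ i k, Wm X U Y P (Sum.inl i) (Sum.inr (Sum.inl k)) = covXU i k := by
    intro i k; simp only [Wm, ZB]; rw [hcovXU i k, hEU]; ring
  have hW_UX : ∀ k i, Wm X U Y P (Sum.inr (Sum.inl k)) (Sum.inl i) = covXU i k :=
    fun k i => (Wm_symm _ _).trans (hW_XU i k)
  have hW_UU : ∀ k l, Wm X U Y P (Sum.inr (Sum.inl k)) (Sum.inr (Sum.inl l)) = VarU k l := by
    intro k l; simp only [Wm, ZB]; rw [hVarU k l, hEU, hEU]; ring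
  -- generic evaluation of Qm on Y-free coefficient vectors
  have hQco : ∀ (a : ℝ) (b : Fin d → ℝ) (l : Fin n → ℝ) (a' : ℝ) (b' : Fin d → ℝ)
      (l' : Fin n → ℝ),
      Qm X U Y P (co a b l 0) (co a' b' l' 0)
        = (∑ i, b i * ((∑ j, b' j * (VarX i j + μbar i * μbar j))
              + (∑ k, l' k * covXU i k) + a' * μbar i))
          + (∑ k, l k * ((∑ i, b' i * covXU i k) + (∑ m, l' m * VarU k m)))
          + a * ((∑ i, b' i * μbar i) + a') := by
    intro a b l a' b' l'
    rw [Qm_eval]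
    simp only [sum_co, hW_XX, hW_XU, hW_Xc, hW_UX, hW_UU, hW_Uc, hW_cX, hW_cU, hW_cc,
      mul_zero, mul_one, zero_mul, add_zero, Finset.sum_const_zero]
  -- translate `hless` into Q-form
  have hm0 : ∫ ω, ((∫ ω', Y ω' ∂P) + βF ⬝ᵥ (X ω - μbar) - Y ω)^2 ∂P
      = Qm X U Y P (co ((∫ ω, Y ω ∂P) - βF ⬝ᵥ μbar) βF (0 : Fin n → ℝ) (-1))
          (co ((∫ ω, Y ω ∂P) - βF ⬝ᵥ μbar) βF (0 : Fin n → ℝ) (-1)) := by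
    rw [← hQeq]
    refine integral_congr_ae (Filter.Eventually.of_forall fun ω => ?_)
    simp only [co_sum, dotProduct_sub, Pi.zero_apply, zero_mul, Finset.sum_const_zero]
    ring
  have hmγ : ∫ ω, ((∫ ω', Y ω' ∂P) + (βF + γ) ⬝ᵥ (X ω - μbar) - Y ω)^2 ∂P
      = Qm X U Y P (co ((∫ ω, Y ω ∂P) - (βF + γ) ⬝ᵥ μbar) (βF + γ) (0 : Fin n → ℝ) (-1))
          (co ((∫ ω, Y ω ∂P) - (βF + γ) ⬝ᵥ μbar) (βF + γ) (0 : Fin n → ℝ) (-1)) := by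
    rw [← hQeq]
    refine integral_congr_ae (Filter.Eventually.of_forall fun ω => ?_)
    simp only [co_sum, dotProduct_sub, Pi.zero_apply, zero_mul, Finset.sum_const_zero]
    ring
  have hsplit : (fun j => co ((∫ ω, Y ω ∂P) - βF ⬝ᵥ μbar) βF (0 : Fin n → ℝ) (-1) j
      + (1:ℝ) * co (-(γ ⬝ᵥ μbar)) γ (0 : Fin n → ℝ) 0 j)
      = co ((∫ ω, Y ω ∂P) - (βF + γ) ⬝ᵥ μbar) (βF + γ) (0 : Fin n → ℝ) (-1) := by
    funext j
    rcases j with i | k | b2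
    · simp [co]
    · simp [co]
    · cases b2 <;> simp [co, add_dotProduct] <;> try ring
  have h3 : 2 * Qm X U Y P (co ((∫ ω, Y ω ∂P) - βF ⬝ᵥ μbar) βF (0 : Fin n → ℝ) (-1))
        (co (-(γ ⬝ᵥ μbar)) γ (0 : Fin n → ℝ) 0)
      + Qm X U Y P (co (-(γ ⬝ᵥ μbar)) γ (0 : Fin n → ℝ) 0)
          (co (-(γ ⬝ᵥ μbar)) γ (0 : Fin n → ℝ) 0) < 0 := by
    have h := Qm_expand (X := X) (U := U) (Y := Y) (P := P)
      (co ((∫ ω, Y ω ∂P) - βF ⬝ᵥ μbar) βF (0 : Fin n → ℝ) (-1))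
      (co (-(γ ⬝ᵥ μbar)) γ (0 : Fin n → ℝ) 0) 1
    rw [hsplit] at h
    rw [hm0, hmγ, h] at hless
    linarith
  -- split the model-0 coefficients through the residual
  have hsplit2 : (fun j => co αF βF δ (-1) j
      + (1:ℝ) * co ((∫ ω, Y ω ∂P) - βF ⬝ᵥ μbar - αF) (0 : Fin d → ℝ) (fun k => -δ k) 0 j)
      = co ((∫ ω, Y ω ∂P) - βF ⬝ᵥ μbar) βF (0 : Fin n → ℝ) (-1) := by
    funext j
    rcases j with i | k | b2
    · simp [co]
    · simp [co]
    · cases b2 <;> simp [co] <;> try ring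
  have h4 : Qm X U Y P (co ((∫ ω, Y ω ∂P) - βF ⬝ᵥ μbar) βF (0 : Fin n → ℝ) (-1))
        (co (-(γ ⬝ᵥ μbar)) γ (0 : Fin n → ℝ) 0)
      = Qm X U Y P (co αF βF δ (-1)) (co (-(γ ⬝ᵥ μbar)) γ (0 : Fin n → ℝ) 0)
        + Qm X U Y P (co ((∫ ω, Y ω ∂P) - βF ⬝ᵥ μbar - αF) (0 : Fin d → ℝ) (fun k => -δ k) 0)
            (co (-(γ ⬝ᵥ μbar)) γ (0 : Fin n → ℝ) 0) := by
    rw [← hsplit2, Qm_smul_add_left]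
    ring
  -- the residual is orthogonal to the perturbation
  have h5 : Qm X U Y P (co αF βF δ (-1)) (co (-(γ ⬝ᵥ μbar)) γ (0 : Fin n → ℝ) 0) = 0 := by
    rw [Qm_symm, Qm_eval, sum_co]
    simp only [Pi.zero_apply, zero_mul, Finset.sum_const_zero, add_zero, hRX, hRc,
      mul_zero, zero_add]
  -- explicit variance values
  have hμb : ∀ i, μbar i = ∑ s, p s * μv s i := by
    intro i; rw [hμbar]; simp
  have hVarXval : ∀ i j, VarX i j = (∑ s, p s * (Sig s i j + μv s i * μv s j))
      - (∑ s, p s * μv s i) * (∑ s, p s * μv s j) := by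
    intro i j; rw [hVarX, hSXX, hEX, hEX, hμb, hμb]
  have hVarUval : ∀ k l, VarU k l = (if k = l then p k.castSucc else 0)
      - p k.castSucc * p l.castSucc := by
    intro k l; rw [hVarU, hEUU, hEU, hEU]; ring
  -- VarX is positive definite
  have hVarXsymm : ∀ i j, VarX j i = VarX i j := by
    intro i j
    rw [hVarX, hVarX]
    rw [show (∫ ω, X ω j * X ω i ∂P) = ∫ ω, X ω i * X ω j ∂P from
      integral_congr_ae (Filter.Eventually.of_forall fun ω => mul_comm _ _)]
    ring
  have hVarXPD : VarX.PosDef := by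
    refine Matrix.PosDef.of_dotProduct_mulVec_pos ?_ fun x hx => ?_
    · ext i j
      simp [Matrix.conjTranspose_apply, hVarXsymm i j]
    · have hq : ∑ i, x i * ∑ j, VarX i j * x j
          = (∑ s, p s * (∑ i, x i * (∑ j, Sig s i j * x j)))
            + ((∑ s, p s * (∑ i, x i * μv s i)^2) - (∑ s, p s * (∑ i, x i * μv s i))^2) := by
        simp only [hVarXval]
        exact quadShuffle x p Sig μv
      have h1 : 0 < ∑ s, p s * (∑ i, x i * (∑ j, Sig s i j * x j)) := by
        refine Finset.sum_pos (fun s _ => mul_pos (hp s) ?_) Finset.univ_nonempty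
        have := (hSigPD s).dotProduct_mulVec_pos hx
        simpa [dotProduct, Matrix.mulVec] using this
      have h2 : 0 ≤ (∑ s, p s * (∑ i, x i * μv s i)^2)
          - (∑ s, p s * (∑ i, x i * μv s i))^2 := by
        have hv := varIdent p (fun s => ∑ i, x i * μv s i) psum
        have hnn : 0 ≤ ∑ s, p s * ((∑ i, x i * μv s i)
            - ∑ t, p t * (∑ i, x i * μv t i))^2 :=
          Finset.sum_nonneg fun s _ => mul_nonneg (hp s).le (sq_nonneg _)
        linarith
      have hpos : 0 < ∑ i, x i * ∑ j, VarX i j * x j := by rw [hq]; linarith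
      simpa [dotProduct, Matrix.mulVec] using hpos
  -- VarU is positive definite
  have hcs : (∑ k : Fin n, p k.castSucc) + p (Fin.last n) = 1 := by
    rw [← psum, Fin.sum_univ_castSucc]
  have hVarUPD : VarU.PosDef := by
    refine Matrix.PosDef.of_dotProduct_mulVec_pos ?_ fun x hx => ?_
    · ext k l
      have hsym : VarU l k = VarU k l := by
        rw [hVarUval, hVarUval]
        by_cases h : k = l
        · subst h; ring
        · simp [h, Ne.symm h]; ring
      simp [Matrix.conjTranspose_apply, hsym]
    · have e2 : ∀ k, ∑ l, ((if k = l then p k.castSucc else 0)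
            - p k.castSucc * p l.castSucc) * x l
          = p k.castSucc * x k - p k.castSucc * (∑ l, p l.castSucc * x l) := by
        intro k
        have e2a : ∀ l, ((if k = l then p k.castSucc else 0) - p k.castSucc * p l.castSucc) * x l
            = (if k = l then p k.castSucc * x l else 0) - p k.castSucc * (p l.castSucc * x l) := by
          intro l; split_ifs <;> ring
        rw [Finset.sum_congr rfl fun l _ => e2a l, Finset.sum_sub_distrib,
          Finset.sum_ite_eq Finset.univ k, ← Finset.mul_sum]
        simp
      have e1 : ∑ k, x k * ∑ l, VarU k l * x l
          = (∑ k, p k.castSucc * x k^2) - (∑ k, p k.castSucc * x k)^2 := by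
        simp only [hVarUval]
        rw [Finset.sum_congr rfl fun k _ => by rw [e2 k]]
        rw [Finset.sum_congr rfl fun k _ =>
          (by ring : x k * (p k.castSucc * x k - p k.castSucc * (∑ l, p l.castSucc * x l))
            = p k.castSucc * x k^2 - (p k.castSucc * x k) * (∑ l, p l.castSucc * x l))]
        rw [Finset.sum_sub_distrib, ← Finset.sum_mul]
        ring
      have e3 : ∑ k, p k.castSucc * (x k - ∑ m, p m.castSucc * x m)^2
          = (∑ k, p k.castSucc * x k^2) - 2*(∑ k, p k.castSucc * x k)^2
            + (∑ k : Fin n, p k.castSucc) * (∑ k, p k.castSucc * x k)^2 := by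
        rw [Finset.sum_congr rfl fun k _ =>
          (by ring : p k.castSucc * (x k - ∑ m, p m.castSucc * x m)^2
            = p k.castSucc * x k^2 - 2*(∑ m, p m.castSucc * x m)*(p k.castSucc * x k)
              + p k.castSucc * (∑ m, p m.castSucc * x m)^2)]
        rw [Finset.sum_add_distrib, Finset.sum_sub_distrib, ← Finset.mul_sum, ← Finset.sum_mul]
        ring
      have hC : (∑ k : Fin n, p k.castSucc) = 1 - p (Fin.last n) := by linarith
      have hq : ∑ k, x k * ∑ l, VarU k l * x l
          = (∑ k, p k.castSucc * (x k - ∑ m, p m.castSucc * x m)^2)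
            + p (Fin.last n) * (∑ m, p m.castSucc * x m)^2 := by
        rw [e1, e3, hC]; ring
      have hnn1 : 0 ≤ ∑ k, p k.castSucc * (x k - ∑ m, p m.castSucc * x m)^2 :=
        Finset.sum_nonneg fun k _ => mul_nonneg (hp _).le (sq_nonneg _)
      have hpos : 0 < ∑ k, x k * ∑ l, VarU k l * x l := by
        rcases eq_or_ne (∑ m, p m.castSucc * x m) 0 with hm | hm
        · obtain ⟨k, hk⟩ : ∃ k, x k ≠ 0 := by
            by_contra h; push_neg at h; exact hx (funext h)
          have hterm : 0 < p k.castSucc * (x k - ∑ m, p m.castSucc * x m)^2 := by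
            rw [hm, sub_zero]
            exact mul_pos (hp _) (by positivity)
          have hpos1 : 0 < ∑ k, p k.castSucc * (x k - ∑ m, p m.castSucc * x m)^2 :=
            Finset.sum_pos' (fun k _ => mul_nonneg (hp _).le (sq_nonneg _))
              ⟨k, Finset.mem_univ k, hterm⟩
          have hnn2 : 0 ≤ p (Fin.last n) * (∑ m, p m.castSucc * x m)^2 :=
            mul_nonneg (hp _).le (sq_nonneg _)
          rw [hq]; linarith
        · have hpos2 : 0 < p (Fin.last n) * (∑ m, p m.castSucc * x m)^2 :=
            mul_pos (hp _) (by positivity)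
          rw [hq]; linarith
      simpa [dotProduct, Matrix.mulVec] using hpos
  -- evaluate the two remaining Q-forms
  have h6 : Qm X U Y P
        (co ((∫ ω, Y ω ∂P) - βF ⬝ᵥ μbar - αF) (0 : Fin d → ℝ) (fun k => -δ k) 0)
        (co (-(γ ⬝ᵥ μbar)) γ (0 : Fin n → ℝ) 0)
      = -∑ k, δ k * ∑ i, γ i * covXU i k := by
    rw [hQco]
    simp only [Pi.zero_apply, zero_mul, mul_zero, Finset.sum_const_zero, add_zero, zero_add]
    rw [show γ ⬝ᵥ μbar = ∑ i, γ i * μbar i from rfl]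
    rw [show (∑ i, γ i * μbar i) + -(∑ i, γ i * μbar i) = 0 from add_neg_cancel _,
      mul_zero, add_zero, ← Finset.sum_neg_distrib]
    exact Finset.sum_congr rfl fun k _ => by ring
  have h7 : Qm X U Y P (co (-(γ ⬝ᵥ μbar)) γ (0 : Fin n → ℝ) 0)
        (co (-(γ ⬝ᵥ μbar)) γ (0 : Fin n → ℝ) 0)
      = ∑ i, γ i * ∑ j, γ j * VarX i j := by
    rw [hQco]
    simp only [Pi.zero_apply, zero_mul, mul_zero, Finset.sum_const_zero, add_zero, zero_add]
    rw [show γ ⬝ᵥ μbar = ∑ i, γ i * μbar i from rfl]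
    have e : ∀ i, γ i * ((∑ j, γ j * (VarX i j + μbar i * μbar j))
          + -(∑ i', γ i' * μbar i') * μbar i)
        = γ i * (∑ j, γ j * VarX i j) + (γ i * μbar i) * (∑ j, γ j * μbar j)
          - (∑ i', γ i' * μbar i') * (γ i * μbar i) := by
      intro i
      have e2 : ∑ j, γ j * (VarX i j + μbar i * μbar j)
          = (∑ j, γ j * VarX i j) + (∑ j, γ j * μbar j) * μbar i := by
        rw [Finset.sum_mul, ← Finset.sum_add_distrib]
        exact Finset.sum_congr rfl fun j _ => by ring
      rw [e2]; ring
    rw [Finset.sum_congr rfl fun i _ => e i, Finset.sum_sub_distrib, Finset.sum_add_distrib,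
      ← Finset.sum_mul, ← Finset.mul_sum]
    ring
  -- the key strict inequality
  have hKEY : 0 < ∑ k, δ k * ∑ i, γ i * covXU i k := by
    have hpsd : 0 ≤ ∑ i, γ i * ∑ j, γ j * VarX i j := by
      have h0 := hVarXPD.posSemidef.dotProduct_mulVec_nonneg γ
      have h1 : (0:ℝ) ≤ ∑ i, γ i * ∑ j, VarX i j * γ j := by
        simpa [dotProduct, Matrix.mulVec] using h0
      refine le_of_le_of_eq h1 (Finset.sum_congr rfl fun i _ => ?_)
      rw [Finset.sum_congr rfl fun j _ => mul_comm (VarX i j) (γ j)]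
    rw [h4, h5, zero_add, h6, h7] at h3
    linarith
  -- sum reordering helper
  have hre : ∑ i, γ i * ∑ k, covXU i k * δ k = ∑ k, δ k * ∑ i, γ i * covXU i k := by
    rw [Finset.sum_congr rfl fun i (_ : i ∈ Finset.univ) => Finset.mul_sum Finset.univ _ (γ i),
      Finset.sum_comm]
    refine Finset.sum_congr rfl fun k _ => ?_
    rw [Finset.mul_sum]
    exact Finset.sum_congr rfl fun i _ => by ring
  -- first moments of linear functionals
  have hIlin : ∀ b : Fin d → ℝ, ∫ ω, b ⬝ᵥ X ω ∂P = ∑ i, b i * μbar i := by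
    intro b
    have h1 : (fun ω => b ⬝ᵥ X ω) = fun ω => ∑ j, co (0:ℝ) b (0 : Fin n → ℝ) 0 j * ZB X U Y j ω := by
      funext ω; rw [co_sum]; simp
    rw [h1, integral_combo hZ2, sum_co]
    simp [ZB, hEX, hEU]
  have hIU : ∀ l : Fin n → ℝ, ∫ ω, (l ⬝ᵥ fun k => U k ω) ∂P = 0 := by
    intro l
    have h1 : (fun ω => l ⬝ᵥ fun k => U k ω)
        = fun ω => ∑ j, co (0:ℝ) (0 : Fin d → ℝ) l 0 j * ZB X U Y j ω := by
      funext ω; rw [co_sum]; simp [dotProduct]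
    rw [h1, integral_combo hZ2, sum_co]
    simp [ZB, hEU]
  -- matrix identities
  have hmmX : VarX *ᵥ (Λ *ᵥ δ) = covXU *ᵥ δ := by
    rw [hΛ, Matrix.mulVec_mulVec, ← Matrix.mul_assoc,
      Matrix.mul_nonsing_inv VarX (isUnit_iff_ne_zero.mpr hVarXPD.det_pos.ne'),
      Matrix.one_mul]
  have hVarUsym : VarUᵀ = VarU := by
    ext k l
    rw [Matrix.transpose_apply, hVarUval, hVarUval]
    by_cases h : k = l
    · subst h; ring
    · simp [h, Ne.symm h]; ring
  have hMT : Mᵀ * VarU = covXU := by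
    rw [hM, Matrix.transpose_mul, Matrix.transpose_transpose, Matrix.transpose_nonsing_inv,
      hVarUsym, Matrix.mul_assoc,
      Matrix.nonsing_inv_mul VarU (isUnit_iff_ne_zero.mpr hVarUPD.det_pos.ne'),
      Matrix.mul_one]
  constructor
  · -- (i)
    have hGi : ∫ ω, (γ ⬝ᵥ X ω) * ((Λ *ᵥ δ) ⬝ᵥ X ω) ∂P
        = Qm X U Y P (co 0 γ (0 : Fin n → ℝ) 0) (co 0 (Λ *ᵥ δ) (0 : Fin n → ℝ) 0) := by
      rw [← hQeq]
      refine integral_congr_ae (Filter.Eventually.of_forall fun ω => ?_)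
      simp only [co_sum, Pi.zero_apply, zero_mul, Finset.sum_const_zero, add_zero, zero_add]
      try ring
    have hcov1 : (∫ ω, (γ ⬝ᵥ X ω) * ((Λ *ᵥ δ) ⬝ᵥ X ω) ∂P)
        - (∫ ω, γ ⬝ᵥ X ω ∂P) * (∫ ω, (Λ *ᵥ δ) ⬝ᵥ X ω ∂P)
        = ∑ i, γ i * ∑ j, (Λ *ᵥ δ) j * VarX i j := by
      rw [hGi, hQco, hIlin γ, hIlin (Λ *ᵥ δ)]
      simp only [Pi.zero_apply, zero_mul, mul_zero, Finset.sum_const_zero, add_zero, zero_add]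
      have e : ∀ i, γ i * (∑ j, (Λ *ᵥ δ) j * (VarX i j + μbar i * μbar j))
          = γ i * (∑ j, (Λ *ᵥ δ) j * VarX i j)
            + (γ i * μbar i) * (∑ j, (Λ *ᵥ δ) j * μbar j) := by
        intro i
        have e2 : ∑ j, (Λ *ᵥ δ) j * (VarX i j + μbar i * μbar j)
            = (∑ j, (Λ *ᵥ δ) j * VarX i j) + (∑ j, (Λ *ᵥ δ) j * μbar j) * μbar i := by
          rw [Finset.sum_mul, ← Finset.sum_add_distrib]
          exact Finset.sum_congr rfl fun j _ => by ring
        rw [e2]; ring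
      rw [Finset.sum_congr rfl fun i _ => e i, Finset.sum_add_distrib, ← Finset.sum_mul]
      ring
    have hv : ∀ i, ∑ j, (Λ *ᵥ δ) j * VarX i j = ∑ k, covXU i k * δ k := by
      intro i
      have h1 : ∑ j, (Λ *ᵥ δ) j * VarX i j = (VarX *ᵥ (Λ *ᵥ δ)) i := by
        show _ = ∑ j, VarX i j * (Λ *ᵥ δ) j
        exact Finset.sum_congr rfl fun j _ => mul_comm _ _
      rw [h1, hmmX]
      rfl
    rw [hcov1, Finset.sum_congr rfl fun i _ => by rw [hv i], hre]
    exact hKEY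
  · -- (ii)
    have hGii : ∫ ω, ((M *ᵥ γ) ⬝ᵥ fun k => U k ω) * (δ ⬝ᵥ fun k => U k ω) ∂P
        = Qm X U Y P (co 0 (0 : Fin d → ℝ) (M *ᵥ γ) 0) (co 0 (0 : Fin d → ℝ) δ 0) := by
      rw [← hQeq]
      refine integral_congr_ae (Filter.Eventually.of_forall fun ω => ?_)
      simp only [co_sum, Pi.zero_apply, zero_mul, Finset.sum_const_zero, add_zero, zero_add,
        dotProduct]
      try ring
    have hcov2 : (∫ ω, ((M *ᵥ γ) ⬝ᵥ fun k => U k ω) * (δ ⬝ᵥ fun k => U k ω) ∂P)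
        - (∫ ω, ((M *ᵥ γ) ⬝ᵥ fun k => U k ω) ∂P) * (∫ ω, (δ ⬝ᵥ fun k => U k ω) ∂P)
        = ∑ k, (M *ᵥ γ) k * ∑ m, δ m * VarU k m := by
      rw [hGii, hQco, hIU (M *ᵥ γ), hIU δ]
      simp only [Pi.zero_apply, zero_mul, mul_zero, Finset.sum_const_zero, add_zero, zero_add]
      ring
    have hstep : ∑ k, (M *ᵥ γ) k * ∑ m, δ m * VarU k m = γ ⬝ᵥ ((Mᵀ * VarU) *ᵥ δ) := by
      have h1 : ∑ k, (M *ᵥ γ) k * ∑ m, δ m * VarU k m = (M *ᵥ γ) ⬝ᵥ (VarU *ᵥ δ) := by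
        refine Finset.sum_congr rfl fun k _ => ?_
        congr 1
        exact Finset.sum_congr rfl fun m _ => mul_comm _ _
      rw [h1, dotProduct_comm, Matrix.dotProduct_mulVec, ← Matrix.mulVec_transpose,
        dotProduct_comm, Matrix.mulVec_mulVec]
    rw [hcov2, hstep, hMT]
    have hfin : γ ⬝ᵥ (covXU *ᵥ δ) = ∑ k, δ k * ∑ i, γ i * covXU i k := by
      rw [← hre]
      rfl
    rw [hfin]
    exact hKEY
end

section
/- In the extended FEO procedure with features partitioned as (X_s, V_s), where X_s and V_s are uncorrelated for each s and var[X_s], var[V_s] have full rank: the coefficient of X_S − μ_S in the projection of Y_S onto {1, U_1(S),…,U_{S̄−1}(S), X_S − μ_S, V_S − ν_S, U_1(S)V_S,…,U_{S̄}(S)V_S} equals β_F = var[X_S − μ_S]⁻¹cov[X_S − μ_S, Y_S], and the coefficient of V_S − ν_S equals the average treatment effect γ̄ = Σ_s p_s γ_s. -/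
open MeasureTheory Matrix Finset

namespace FEO15

/-- generic linear form used in the FEO projection problem -/
def formF {Ω : Type*} {n d e : ℕ} (S : Ω → Fin (n + 1)) (X : Ω → Fin d → ℝ)
    (V : Ω → Fin e → ℝ) (μv : Fin (n + 1) → Fin d → ℝ) (νv : Fin (n + 1) → Fin e → ℝ)
    (U : Fin n → Ω → ℝ) (Ufull : Fin (n + 1) → Ω → ℝ)
    (a : ℝ) (l : Fin n → ℝ) (b : Fin d → ℝ) (g : Fin e → ℝ)
    (c : Fin (n + 1) → Fin e → ℝ) (ω : Ω) : ℝ :=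
  a + (∑ k, l k * U k ω) + b ⬝ᵥ (X ω - μv (S ω)) + g ⬝ᵥ (V ω - νv (S ω))
    + (∑ i, ∑ k, c i k * Ufull i ω * V ω k)

variable {Ω : Type*} {n d e : ℕ} {S : Ω → Fin (n + 1)} {X : Ω → Fin d → ℝ}
    {V : Ω → Fin e → ℝ} {μv : Fin (n + 1) → Fin d → ℝ} {νv : Fin (n + 1) → Fin e → ℝ}
    {U : Fin n → Ω → ℝ} {Ufull : Fin (n + 1) → Ω → ℝ}

theorem formF_add (a a' : ℝ) (l l' : Fin n → ℝ) (b b' : Fin d → ℝ) (g g' : Fin e → ℝ)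
    (c c' : Fin (n + 1) → Fin e → ℝ) (ω : Ω) :
    formF S X V μv νv U Ufull (a + a') (l + l') (b + b') (g + g') (c + c') ω
      = formF S X V μv νv U Ufull a l b g c ω + formF S X V μv νv U Ufull a' l' b' g' c' ω := by
  simp only [formF, add_dotProduct, Pi.add_apply, add_mul, Finset.sum_add_distrib]
  ring

theorem formF_smul (t a : ℝ) (l : Fin n → ℝ) (b : Fin d → ℝ) (g : Fin e → ℝ)
    (c : Fin (n + 1) → Fin e → ℝ) (ω : Ω) :
    formF S X V μv νv U Ufull (t * a) (t • l) (t • b) (t • g) (t • c) ω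
      = t * formF S X V μv νv U Ufull a l b g c ω := by
  simp only [formF, smul_dotProduct, Pi.smul_apply, smul_eq_mul, Finset.mul_sum,
    mul_add, mul_assoc]

theorem formF_zero (ω : Ω) : formF S X V μv νv U Ufull 0 0 0 0 0 ω = 0 := by
  simp [formF]

theorem formF_single_b (i : Fin d) (ω : Ω) :
    formF S X V μv νv U Ufull 0 0 (Pi.single i 1) 0 0 ω = X ω i - μv (S ω) i := by
  simp [formF]

theorem formF_single_g (j : Fin e) (ω : Ω) :
    formF S X V μv νv U Ufull 0 0 0 (Pi.single j 1) 0 ω = V ω j - νv (S ω) j := by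
  simp [formF]

end FEO15

open FEO15 in
/-- Extended FEO with interactions: in the projection of `Y_S` onto
`{1, U_1(S),…,U_{S̄−1}(S), X_S − μ_S, V_S − ν_S, U_1(S)V_S,…,U_S̄(S)V_S}`, the coefficient
of `X_S − μ_S` equals `β_F = var[X_S − μ_S]⁻¹ cov[X_S − μ_S, Y_S]` and the coefficient of
`V_S − ν_S` equals the average treatment effect `γ̄ = Σ_s p_s γ_s`. -/
theorem stmt15
    {Ω : Type*} [MeasurableSpace Ω] (P : Measure Ω) [IsProbabilityMeasure P]
    (n d e : ℕ) (S : Ω → Fin (n + 1)) (hS : Measurable S)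
    (X : Ω → Fin d → ℝ) (V : Ω → Fin e → ℝ) (Y : Ω → ℝ) (ε : Ω → ℝ)
    (p : Fin (n + 1) → ℝ) (μv : Fin (n + 1) → Fin d → ℝ) (νv : Fin (n + 1) → Fin e → ℝ)
    (SigX : Fin (n + 1) → Matrix (Fin d) (Fin d) ℝ)
    (SigV : Fin (n + 1) → Matrix (Fin e) (Fin e) ℝ)
    (αb : Fin (n + 1) → ℝ) (βb : Fin (n + 1) → Fin d → ℝ) (γb : Fin (n + 1) → Fin e → ℝ)
    (hp : ∀ s, 0 < p s)
    (hmeas : ∀ s, P {ω | S ω = s} = ENNReal.ofReal (p s))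
    (hmeanX : ∀ s i, ∫ ω in {ω | S ω = s}, X ω i ∂P = p s * μv s i)
    (hmeanV : ∀ s j, ∫ ω in {ω | S ω = s}, V ω j ∂P = p s * νv s j)
    (hcovX : ∀ s i j,
      ∫ ω in {ω | S ω = s}, (X ω i - μv s i) * (X ω j - μv s j) ∂P = p s * SigX s i j)
    (hcovV : ∀ s i j,
      ∫ ω in {ω | S ω = s}, (V ω i - νv s i) * (V ω j - νv s j) ∂P = p s * SigV s i j)
    -- full-rank variances and per-bank uncorrelatedness of X and V
    (hSigX : ∀ s, IsUnit (SigX s).det) (hSigV : ∀ s, IsUnit (SigV s).det)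
    (hXV : ∀ s i j, ∫ ω in {ω | S ω = s}, (X ω i - μv s i) * (V ω j - νv s j) ∂P = 0)
    -- bank-specific models
    (hY : ∀ ω, Y ω = αb (S ω) + βb (S ω) ⬝ᵥ X ω + γb (S ω) ⬝ᵥ V ω + ε ω)
    (hε : ∀ s, ∫ ω in {ω | S ω = s}, ε ω ∂P = 0)
    (hXε : ∀ s i, ∫ ω in {ω | S ω = s}, (X ω i - μv s i) * ε ω ∂P = 0)
    (hVε : ∀ s j, ∫ ω in {ω | S ω = s}, (V ω j - νv s j) * ε ω ∂P = 0)
    -- centered dummies: U for i = 1,…,S̄−1, Ufull for all banks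
    (U : Fin n → Ω → ℝ)
    (hU : ∀ i ω, U i ω = (if S ω = i.castSucc then 1 else 0) - p i.castSucc)
    (Ufull : Fin (n + 1) → Ω → ℝ)
    (hUfull : ∀ i ω, Ufull i ω = (if S ω = i then 1 else 0) - p i)
    (hint : ∀ (a : ℝ) (l : Fin n → ℝ) (b : Fin d → ℝ) (g : Fin e → ℝ)
        (c : Fin (n + 1) → Fin e → ℝ),
      Integrable (fun ω => (a + (∑ k, l k * U k ω) + b ⬝ᵥ (X ω - μv (S ω))
        + g ⬝ᵥ (V ω - νv (S ω)) + (∑ i, ∑ k, c i k * Ufull i ω * V ω k) - Y ω) ^ 2) P)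
    -- β_F = var[X_S − μ_S]⁻¹ cov[X_S − μ_S, Y_S]
    (Vc : Matrix (Fin d) (Fin d) ℝ)
    (hVc : ∀ i j, Vc i j =
      (∫ ω, (X ω i - μv (S ω) i) * (X ω j - μv (S ω) j) ∂P)
        - (∫ ω, (X ω i - μv (S ω) i) ∂P) * (∫ ω, (X ω j - μv (S ω) j) ∂P))
    (cvY : Fin d → ℝ)
    (hcvY : ∀ i, cvY i =
      (∫ ω, (X ω i - μv (S ω) i) * Y ω ∂P)
        - (∫ ω, (X ω i - μv (S ω) i) ∂P) * (∫ ω, Y ω ∂P))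
    (βF : Fin d → ℝ) (hβF : βF = Vc⁻¹ *ᵥ cvY)
    -- average treatment effect
    (γbar : Fin e → ℝ) (hγbar : γbar = ∑ s, p s • γb s) :
    -- βF and γ̄ are the X- and V-coefficients of the least-squares projection
    ∃ (a : ℝ) (δ : Fin n → ℝ) (c : Fin (n + 1) → Fin e → ℝ),
      ∀ (a' : ℝ) (l : Fin n → ℝ) (b : Fin d → ℝ) (g : Fin e → ℝ)
        (c' : Fin (n + 1) → Fin e → ℝ),
        ∫ ω, (a + (∑ k, δ k * U k ω) + βF ⬝ᵥ (X ω - μv (S ω))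
            + γbar ⬝ᵥ (V ω - νv (S ω)) + (∑ i, ∑ k, c i k * Ufull i ω * V ω k) - Y ω) ^ 2 ∂P
          ≤ ∫ ω, (a' + (∑ k, l k * U k ω) + b ⬝ᵥ (X ω - μv (S ω))
            + g ⬝ᵥ (V ω - νv (S ω)) + (∑ i, ∑ k, c' i k * Ufull i ω * V ω k) - Y ω) ^ 2 ∂P := by
  classical
  -- abbreviations
  set F := formF S X V μv νv U Ufull with hFdef
  -- measurability of strata
  have hAm : ∀ s : Fin (n + 1), MeasurableSet {ω | S ω = s} :=
    fun s => hS (measurableSet_singleton s)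
  have hPA : ∀ s, (P {ω | S ω = s}).toReal = p s := fun s => by
    rw [hmeas s, ENNReal.toReal_ofReal (hp s).le]
  -- p sums to one
  have hpsum : ∑ s, p s = 1 := by
    have h0 : ∀ s : Fin (n + 1), P (S ⁻¹' {s}) = ENNReal.ofReal (p s) := fun s => hmeas s
    have h1 : (∑ s : Fin (n + 1), P (S ⁻¹' {s})) = P (S ⁻¹' ↑(Finset.univ : Finset (Fin (n+1)))) :=
      sum_measure_preimage_singleton _ (fun y _ => hAm y)
    rw [Finset.coe_univ, Set.preimage_univ, measure_univ] at h1
    simp only [h0] at h1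
    rw [← ENNReal.ofReal_sum_of_nonneg (fun i _ => (hp i).le)] at h1
    exact ENNReal.ofReal_eq_one.mp h1
  -- splitting integrals over the strata
  have hsplit : ∀ f : Ω → ℝ, Integrable f P →
      ∫ ω, f ω ∂P = ∑ s, ∫ ω in {ω | S ω = s}, f ω ∂P := by
    intro f hf
    have hu : (⋃ s, {ω | S ω = s}) = Set.univ := by ext ω; simp
    have hd : Pairwise (Function.onFun Disjoint fun s => {ω | S ω = s}) := by
      intro s t hst
      refine Set.disjoint_left.2 ?_
      rintro ω (h1 : S ω = s) (h2 : S ω = t)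
      exact hst (h1 ▸ h2)
    rw [← setIntegral_univ, ← hu, integral_iUnion_fintype hAm hd (fun s => hf.integrableOn)]
  -- integrals over strata with congruence
  have hstr : ∀ (s : Fin (n+1)) (f g : Ω → ℝ), (∀ ω, S ω = s → f ω = g ω) →
      ∫ ω in {ω | S ω = s}, f ω ∂P = ∫ ω in {ω | S ω = s}, g ω ∂P :=
    fun s f g h => setIntegral_congr_fun (hAm s) (fun ω hω => h ω hω)
  -- bounded measurable functions of S
  have hmS : ∀ m : Fin (n + 1) → ℝ, Measurable (fun ω => m (S ω)) :=
    fun m => (measurable_of_countable m).comp hS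
  have hIcomp : ∀ m : Fin (n + 1) → ℝ, Integrable (fun ω => m (S ω)) P := by
    intro m
    refine ⟨(hmS m).aestronglyMeasurable, ?_⟩
    refine HasFiniteIntegral.of_bounded (C := ∑ s, |m s|) (ae_of_all _ fun ω => ?_)
    exact Finset.single_le_sum (f := fun s => |m s|) (fun i _ => abs_nonneg _) (mem_univ _)
  have hIm : ∀ (m : Fin (n + 1) → ℝ) (f : Ω → ℝ), Integrable f P →
      Integrable (fun ω => m (S ω) * f ω) P := by
    intro m f hf
    have := hf.bdd_mul (hmS m).aestronglyMeasurable
      (c := ∑ s, |m s|) (ae_of_all _ fun ω => Finset.single_le_sum (f := fun s => |m s|)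
        (fun i _ => abs_nonneg _) (mem_univ _))
    exact this
  -- ## integrability suite
  have hI2 : ∀ (a : ℝ) l b g c, Integrable (fun ω => (F a l b g c ω - Y ω) ^ 2) P :=
    fun a l b g c => hint a l b g c
  have hIL : ∀ (a : ℝ) l b g c, Integrable (fun ω => F a l b g c ω - Y ω) P := by
    intro a l b g c
    have e1 : ∀ ω, F (a + 1) l b g c ω - Y ω = (F a l b g c ω - Y ω) + 1 := by
      intro ω; simp only [hFdef, formF]; ring
    have : (fun ω => F a l b g c ω - Y ω)
        = fun ω => (((F (a+1) l b g c ω - Y ω) ^ 2 - (F a l b g c ω - Y ω) ^ 2) - 1) / 2 := by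
      funext ω; rw [e1 ω]; ring
    rw [this]
    exact (((hI2 (a+1) l b g c).sub (hI2 a l b g c)).sub (integrable_const 1)).div_const 2
  have hIY : Integrable Y P := by
    have h := hIL 0 0 0 0 0
    have hYe : Y = fun ω => 0 - (F 0 0 0 0 0 ω - Y ω) := by
      funext ω; rw [hFdef, formF_zero]; ring
    rw [hYe]
    exact (integrable_const 0).sub h
  have hIF : ∀ (a : ℝ) l b g c, Integrable (fun ω => F a l b g c ω) P := by
    intro a l b g c
    have : (fun ω => F a l b g c ω) = fun ω => (F a l b g c ω - Y ω) + Y ω := by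
      funext ω; ring
    rw [this]; exact (hIL a l b g c).add hIY
  have hIYY : Integrable (fun ω => Y ω ^ 2) P := by
    have h := hI2 0 0 0 0 0
    have : (fun ω => (F 0 0 0 0 0 ω - Y ω) ^ 2) = fun ω => Y ω ^ 2 := by
      funext ω; rw [hFdef, formF_zero]; ring
    rwa [this] at h
  have hIFsq : ∀ (a : ℝ) l b g c, Integrable (fun ω => (F a l b g c ω) ^ 2) P := by
    intro a l b g c
    have e2 : ∀ ω, F (2 * a) ((2:ℝ) • l) ((2:ℝ) • b) ((2:ℝ) • g) ((2:ℝ) • c) ω = 2 * F a l b g c ω := by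
      intro ω; rw [hFdef]; exact formF_smul 2 a l b g c ω
    have : (fun ω => (F a l b g c ω) ^ 2) = fun ω =>
        (((F (2*a) ((2:ℝ)•l) ((2:ℝ)•b) ((2:ℝ)•g) ((2:ℝ)•c) ω - Y ω) ^ 2
          - 2 * (F a l b g c ω - Y ω) ^ 2) + Y ω ^ 2) / 2 := by
      funext ω; rw [e2 ω]; ring
    rw [this]
    exact (((hI2 (2*a) ((2:ℝ)•l) ((2:ℝ)•b) ((2:ℝ)•g) ((2:ℝ)•c)).sub ((hI2 a l b g c).const_mul 2)).add
      hIYY).div_const 2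
  have hIFF : ∀ (a : ℝ) l b g c (a' : ℝ) l' b' g' c',
      Integrable (fun ω => F a l b g c ω * F a' l' b' g' c' ω) P := by
    intro a l b g c a' l' b' g' c'
    have e3 : ∀ ω, F (a + a') (l + l') (b + b') (g + g') (c + c') ω
        = F a l b g c ω + F a' l' b' g' c' ω := by
      intro ω; rw [hFdef]; exact formF_add a a' l l' b b' g g' c c' ω
    have : (fun ω => F a l b g c ω * F a' l' b' g' c' ω) = fun ω =>
        ((F (a+a') (l+l') (b+b') (g+g') (c+c') ω) ^ 2
          - (F a l b g c ω) ^ 2 - (F a' l' b' g' c' ω) ^ 2) / 2 := by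
      funext ω; rw [e3 ω]; ring
    rw [this]
    exact (((hIFsq (a+a') (l+l') (b+b') (g+g') (c+c')).sub (hIFsq a l b g c)).sub
      (hIFsq a' l' b' g' c')).div_const 2
  have hIFY : ∀ (a : ℝ) l b g c, Integrable (fun ω => F a l b g c ω * Y ω) P := by
    intro a l b g c
    have : (fun ω => F a l b g c ω * Y ω) = fun ω =>
        ((F a l b g c ω) ^ 2 + Y ω ^ 2 - (F a l b g c ω - Y ω) ^ 2) / 2 := by
      funext ω; ring
    rw [this]
    exact (((hIFsq a l b g c).add hIYY).sub (hI2 a l b g c)).div_const 2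
  -- ## atomic integrabilities
  have hZF : ∀ i : Fin d, (fun ω => F 0 0 (Pi.single i 1) 0 0 ω)
      = fun ω => X ω i - μv (S ω) i := by
    intro i; funext ω; rw [hFdef]; exact formF_single_b i ω
  have hWF : ∀ j : Fin e, (fun ω => F 0 0 0 (Pi.single j 1) 0 ω)
      = fun ω => V ω j - νv (S ω) j := by
    intro j; funext ω; rw [hFdef]; exact formF_single_g j ω
  have hIZ : ∀ i, Integrable (fun ω => X ω i - μv (S ω) i) P := fun i => by
    rw [← hZF i]; exact hIF 0 0 (Pi.single i 1) 0 0
  have hIW : ∀ j, Integrable (fun ω => V ω j - νv (S ω) j) P := fun j => by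
    rw [← hWF j]; exact hIF 0 0 0 (Pi.single j 1) 0
  have hIZF : ∀ (i : Fin d) (a : ℝ) l b g c,
      Integrable (fun ω => (X ω i - μv (S ω) i) * F a l b g c ω) P := by
    intro i a l b g c
    have h := hIFF 0 0 (Pi.single i 1) 0 0 a l b g c
    rwa [show (fun ω => F 0 0 (Pi.single i 1) 0 0 ω * F a l b g c ω)
      = fun ω => (X ω i - μv (S ω) i) * F a l b g c ω from
        funext fun ω => by rw [hFdef, formF_single_b]] at h
  have hIWF : ∀ (j : Fin e) (a : ℝ) l b g c,
      Integrable (fun ω => (V ω j - νv (S ω) j) * F a l b g c ω) P := by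
    intro j a l b g c
    have h := hIFF 0 0 0 (Pi.single j 1) 0 a l b g c
    rwa [show (fun ω => F 0 0 0 (Pi.single j 1) 0 ω * F a l b g c ω)
      = fun ω => (V ω j - νv (S ω) j) * F a l b g c ω from
        funext fun ω => by rw [hFdef, formF_single_g]] at h
  have hIZZ : ∀ i j, Integrable
      (fun ω => (X ω i - μv (S ω) i) * (X ω j - μv (S ω) j)) P := by
    intro i j
    have h := hIZF i 0 0 (Pi.single j 1) 0 0
    rwa [show (fun ω => (X ω i - μv (S ω) i) * F 0 0 (Pi.single j 1) 0 0 ω)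
      = fun ω => (X ω i - μv (S ω) i) * (X ω j - μv (S ω) j) from
        funext fun ω => by rw [hFdef, formF_single_b]] at h
  have hIZW : ∀ i j, Integrable
      (fun ω => (X ω i - μv (S ω) i) * (V ω j - νv (S ω) j)) P := by
    intro i j
    have h := hIZF i 0 0 0 (Pi.single j 1) 0
    rwa [show (fun ω => (X ω i - μv (S ω) i) * F 0 0 0 (Pi.single j 1) 0 ω)
      = fun ω => (X ω i - μv (S ω) i) * (V ω j - νv (S ω) j) from
        funext fun ω => by rw [hFdef, formF_single_g]] at h
  have hIZY : ∀ i, Integrable (fun ω => (X ω i - μv (S ω) i) * Y ω) P := by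
    intro i
    have h := hIFY 0 0 (Pi.single i 1) 0 0
    rwa [show (fun ω => F 0 0 (Pi.single i 1) 0 0 ω * Y ω)
      = fun ω => (X ω i - μv (S ω) i) * Y ω from
        funext fun ω => by rw [hFdef, formF_single_b]] at h
  have hIWY : ∀ j, Integrable (fun ω => (V ω j - νv (S ω) j) * Y ω) P := by
    intro j
    have h := hIFY 0 0 0 (Pi.single j 1) 0
    rwa [show (fun ω => F 0 0 0 (Pi.single j 1) 0 ω * Y ω)
      = fun ω => (V ω j - νv (S ω) j) * Y ω from
        funext fun ω => by rw [hFdef, formF_single_g]] at h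
  -- ## per-stratum moment facts
  have hIX : ∀ i, Integrable (fun ω => X ω i) P := by
    intro i
    have : (fun ω => X ω i) = fun ω => (X ω i - μv (S ω) i) + (fun t => μv t i) (S ω) := by
      funext ω; simp
    rw [this]; exact (hIZ i).add (hIcomp (fun t => μv t i))
  have hIV : ∀ j, Integrable (fun ω => V ω j) P := by
    intro j
    have : (fun ω => V ω j) = fun ω => (V ω j - νv (S ω) j) + (fun t => νv t j) (S ω) := by
      funext ω; simp
    rw [this]; exact (hIW j).add (hIcomp (fun t => νv t j))
  have hZ0 : ∀ s i, ∫ ω in {ω | S ω = s}, (X ω i - μv (S ω) i) ∂P = 0 := by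
    intro s i
    rw [hstr s _ (fun ω => X ω i - μv s i) (fun ω hω => by rw [hω])]
    rw [integral_sub ((hIX i).integrableOn) (integrable_const _).integrableOn,
      hmeanX s i, setIntegral_const, measureReal_def, hPA s, smul_eq_mul]
    ring
  have hW0 : ∀ s j, ∫ ω in {ω | S ω = s}, (V ω j - νv (S ω) j) ∂P = 0 := by
    intro s j
    rw [hstr s _ (fun ω => V ω j - νv s j) (fun ω hω => by rw [hω])]
    rw [integral_sub ((hIV j).integrableOn) (integrable_const _).integrableOn,
      hmeanV s j, setIntegral_const, measureReal_def, hPA s, smul_eq_mul]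
    ring
  have hZZ0 : ∀ s i j, ∫ ω in {ω | S ω = s},
      (X ω i - μv (S ω) i) * (X ω j - μv (S ω) j) ∂P = p s * SigX s i j := by
    intro s i j
    rw [hstr s _ (fun ω => (X ω i - μv s i) * (X ω j - μv s j)) (fun ω hω => by rw [hω])]
    exact hcovX s i j
  have hZW0 : ∀ s i j, ∫ ω in {ω | S ω = s},
      (X ω i - μv (S ω) i) * (V ω j - νv (S ω) j) ∂P = 0 := by
    intro s i j
    rw [hstr s _ (fun ω => (X ω i - μv s i) * (V ω j - νv s j)) (fun ω hω => by rw [hω])]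
    exact hXV s i j
  have hSymX : ∀ s i j, SigX s i j = SigX s j i := by
    intro s i j
    have h3 : ∫ ω in {ω | S ω = s}, (X ω i - μv s i) * (X ω j - μv s j) ∂P
        = ∫ ω in {ω | S ω = s}, (X ω j - μv s j) * (X ω i - μv s i) ∂P :=
      integral_congr_ae (Filter.Eventually.of_forall fun ω => mul_comm _ _)
    have h4 : p s * SigX s i j = p s * SigX s j i := by
      rw [← hcovX s i j, ← hcovX s j i, h3]
    exact mul_left_cancel₀ (hp s).ne' h4
  -- ## stratum error function G s (agrees with ε on stratum s)
  set G : Fin (n + 1) → Ω → ℝ := fun s ω =>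
    Y ω - F (αb s + βb s ⬝ᵥ μv s + γb s ⬝ᵥ νv s) 0 (βb s) (γb s) 0 ω with hGdef
  have hGε : ∀ s ω, S ω = s → G s ω = ε ω := by
    intro s ω hω
    simp only [hGdef, hFdef, formF, hω, hY ω, dotProduct_sub, Pi.zero_apply, zero_mul,
      mul_zero, Finset.sum_const_zero]
    ring
  have hYdec : ∀ s ω, Y ω
      = F (αb s + βb s ⬝ᵥ μv s + γb s ⬝ᵥ νv s) 0 (βb s) (γb s) 0 ω + G s ω := by
    intro s ω; simp only [hGdef]; ring
  have hIG : ∀ s, Integrable (G s) P := by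
    intro s; simp only [hGdef]; exact hIY.sub (hIF _ _ _ _ _)
  have hIZG : ∀ s i, Integrable (fun ω => (X ω i - μv (S ω) i) * G s ω) P := by
    intro s i
    have heq : (fun ω => (X ω i - μv (S ω) i) * G s ω)
        = fun ω => (X ω i - μv (S ω) i) * Y ω
          - (X ω i - μv (S ω) i)
            * F (αb s + βb s ⬝ᵥ μv s + γb s ⬝ᵥ νv s) 0 (βb s) (γb s) 0 ω := by
      funext ω; simp only [hGdef]; ring
    rw [heq]; exact (hIZY i).sub (hIZF i _ _ _ _ _)
  have hIWG : ∀ s j, Integrable (fun ω => (V ω j - νv (S ω) j) * G s ω) P := by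
    intro s j
    have heq : (fun ω => (V ω j - νv (S ω) j) * G s ω)
        = fun ω => (V ω j - νv (S ω) j) * Y ω
          - (V ω j - νv (S ω) j)
            * F (αb s + βb s ⬝ᵥ μv s + γb s ⬝ᵥ νv s) 0 (βb s) (γb s) 0 ω := by
      funext ω; simp only [hGdef]; ring
    rw [heq]; exact (hIWY j).sub (hIWF j _ _ _ _ _)
  have hG0 : ∀ s, ∫ ω in {ω | S ω = s}, G s ω ∂P = 0 := by
    intro s; rw [hstr s _ ε (fun ω hω => hGε s ω hω)]; exact hε s
  have hZG0 : ∀ s i, ∫ ω in {ω | S ω = s}, (X ω i - μv (S ω) i) * G s ω ∂P = 0 := by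
    intro s i
    rw [hstr s _ (fun ω => (X ω i - μv s i) * ε ω)
      (fun ω hω => by rw [hGε s ω hω, hω])]
    exact hXε s i
  have hWG0 : ∀ s j, ∫ ω in {ω | S ω = s}, (V ω j - νv (S ω) j) * G s ω ∂P = 0 := by
    intro s j
    rw [hstr s _ (fun ω => (V ω j - νv s j) * ε ω)
      (fun ω hω => by rw [hGε s ω hω, hω])]
    exact hVε s j
  -- ## global first and second moments
  have hZint0 : ∀ i, ∫ ω, (X ω i - μv (S ω) i) ∂P = 0 := by
    intro i; rw [hsplit _ (hIZ i)]
    exact Finset.sum_eq_zero fun s _ => hZ0 s i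
  have hVc' : ∀ i j, Vc i j = ∑ s, p s * SigX s i j := by
    intro i j
    rw [hVc i j, hZint0 i, hZint0 j, hsplit _ (hIZZ i j)]
    simp only [hZZ0, zero_mul, sub_zero]
  have hcvY' : ∀ i, cvY i = ∑ s, p s * (∑ j, SigX s i j * βb s j) := by
    intro i
    rw [hcvY i, hZint0 i, zero_mul, sub_zero, hsplit _ (hIZY i)]
    refine Finset.sum_congr rfl fun s _ => ?_
    have h1 : ∫ ω in {ω | S ω = s}, (X ω i - μv (S ω) i) * Y ω ∂P
        = ∫ ω in {ω | S ω = s},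
            ((αb s + βb s ⬝ᵥ μv s + γb s ⬝ᵥ νv s) * (X ω i - μv (S ω) i)
            + ((∑ j, βb s j * ((X ω i - μv (S ω) i) * (X ω j - μv (S ω) j)))
            + ((∑ k, γb s k * ((X ω i - μv (S ω) i) * (V ω k - νv (S ω) k)))
            + (X ω i - μv (S ω) i) * G s ω))) ∂P := by
      refine hstr s _ _ fun ω hω => ?_
      rw [hYdec s ω]
      simp only [hFdef, formF, hω, dotProduct, Pi.zero_apply, zero_mul, mul_zero,
        Finset.sum_const_zero, Pi.sub_apply, Finset.mul_sum, mul_comm, mul_left_comm,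
        mul_assoc, add_mul, mul_add]
      ring
    rw [h1]
    have hc1 : IntegrableOn (fun ω => (αb s + βb s ⬝ᵥ μv s + γb s ⬝ᵥ νv s)
        * (X ω i - μv (S ω) i)) {ω | S ω = s} P := ((hIZ i).const_mul _).integrableOn
    have hc2 : IntegrableOn (fun ω => ∑ j, βb s j
        * ((X ω i - μv (S ω) i) * (X ω j - μv (S ω) j))) {ω | S ω = s} P :=
      (integrable_finset_sum _ fun j _ => (hIZZ i j).const_mul _).integrableOn
    have hc3 : IntegrableOn (fun ω => ∑ k, γb s k
        * ((X ω i - μv (S ω) i) * (V ω k - νv (S ω) k))) {ω | S ω = s} P :=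
      (integrable_finset_sum _ fun k _ => (hIZW i k).const_mul _).integrableOn
    have hc4 : IntegrableOn (fun ω => (X ω i - μv (S ω) i) * G s ω) {ω | S ω = s} P :=
      (hIZG s i).integrableOn
    have hc34 : IntegrableOn (fun ω => (∑ k, γb s k
        * ((X ω i - μv (S ω) i) * (V ω k - νv (S ω) k)))
        + (X ω i - μv (S ω) i) * G s ω) {ω | S ω = s} P := hc3.add hc4
    have hc234 : IntegrableOn (fun ω => (∑ j, βb s j
        * ((X ω i - μv (S ω) i) * (X ω j - μv (S ω) j)))
        + ((∑ k, γb s k * ((X ω i - μv (S ω) i) * (V ω k - νv (S ω) k)))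
        + (X ω i - μv (S ω) i) * G s ω)) {ω | S ω = s} P := hc2.add hc34
    rw [integral_add hc1 hc234, integral_add hc2 hc34, integral_add hc3 hc4,
      integral_finset_sum _ (fun j _ => ((hIZZ i j).const_mul _).integrableOn),
      integral_finset_sum _ (fun k _ => ((hIZW i k).const_mul _).integrableOn)]
    simp only [integral_const_mul, hZ0, hZZ0, hZW0, hZG0, mul_zero, add_zero, zero_add,
      Finset.sum_const_zero]
    rw [Finset.mul_sum]
    exact Finset.sum_congr rfl fun j _ => by ring
  -- ## quadratic form nonnegativity
  have hq : ∀ (s : Fin (n+1)) (w : Fin d → ℝ), 0 ≤ ∑ i, ∑ j, w i * (SigX s i j * w j) := by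
    intro s w
    have hsq : 0 ≤ ∫ ω in {ω | S ω = s}, (∑ i, w i * (X ω i - μv (S ω) i)) ^ 2 ∂P :=
      integral_nonneg fun ω => sq_nonneg _
    have e : (fun ω => (∑ i, w i * (X ω i - μv (S ω) i)) ^ 2)
        = fun ω => ∑ i, ∑ j, (w i * w j) *
            ((X ω i - μv (S ω) i) * (X ω j - μv (S ω) j)) := by
      funext ω
      rw [sq, Finset.sum_mul_sum]
      exact Finset.sum_congr rfl fun i _ => Finset.sum_congr rfl fun j _ => by ring
    rw [e, integral_finset_sum _ (fun i _ => (integrable_finset_sum _ fun j _ =>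
        (hIZZ i j).const_mul _).integrableOn)] at hsq
    have e2 : ∀ i ∈ Finset.univ, ∫ ω in {ω | S ω = s}, (∑ j, (w i * w j) *
        ((X ω i - μv (S ω) i) * (X ω j - μv (S ω) j))) ∂P
        = p s * ∑ j, w i * (SigX s i j * w j) := by
      intro i _
      rw [integral_finset_sum _ (fun j _ => ((hIZZ i j).const_mul _).integrableOn)]
      simp only [integral_const_mul, hZZ0]
      rw [Finset.mul_sum]
      exact Finset.sum_congr rfl fun j _ => by ring
    rw [Finset.sum_congr rfl e2, ← Finset.mul_sum] at hsq
    exact nonneg_of_mul_nonneg_right hsq (hp s)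
  -- ## Vc is invertible
  have hVcUnit : IsUnit Vc.det := by
    rw [isUnit_iff_ne_zero]
    intro hdet
    obtain ⟨v, hv0, hVcv⟩ := (Matrix.exists_mulVec_eq_zero_iff).2 hdet
    have hswap : v ⬝ᵥ (Vc *ᵥ v) = ∑ s, p s * (∑ i, ∑ j, v i * (SigX s i j * v j)) := by
      have e1 : v ⬝ᵥ (Vc *ᵥ v) = ∑ i, ∑ s, ∑ j, p s * (v i * (SigX s i j * v j)) := by
        simp only [dotProduct, Matrix.mulVec, hVc']
        refine Finset.sum_congr rfl fun i _ => ?_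
        rw [Finset.mul_sum]
        rw [Finset.sum_comm]
        refine Finset.sum_congr rfl fun s _ => ?_
        rw [Finset.sum_mul, Finset.mul_sum]
        exact Finset.sum_congr rfl fun j _ => by ring
      rw [e1, Finset.sum_comm]
      refine Finset.sum_congr rfl fun s _ => ?_
      rw [Finset.mul_sum]
      refine Finset.sum_congr rfl fun i _ => ?_
      rw [Finset.mul_sum]
    have hsum0 : ∑ s, p s * (∑ i, ∑ j, v i * (SigX s i j * v j)) = 0 := by
      rw [← hswap, hVcv]; simp [dotProduct]
    have hq0 : ∑ i, ∑ j, v i * (SigX (0 : Fin (n+1)) i j * v j) = 0 := by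
      have hterm := (Finset.sum_eq_zero_iff_of_nonneg
        (fun s _ => mul_nonneg (hp s).le (hq s v))).mp hsum0 (0 : Fin (n+1)) (mem_univ _)
      exact (mul_eq_zero.mp hterm).resolve_left (hp (0 : Fin (n+1))).ne'
    have hpsd : Matrix.PosSemidef (SigX (0 : Fin (n+1))) := by
      constructor
      · exact Matrix.ext fun i j => by
          simp [Matrix.conjTranspose_apply, hSymX (0 : Fin (n+1)) j i]
      · intro x
        have hx := hq (0 : Fin (n+1)) x
        have e : star x ⬝ᵥ (SigX (0 : Fin (n+1)) *ᵥ x)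
            = ∑ i, ∑ j, x i * (SigX (0 : Fin (n+1)) i j * x j) := by
          simp only [dotProduct, Matrix.mulVec, Pi.star_apply, star_trivial]
          exact Finset.sum_congr rfl fun i _ => by rw [Finset.mul_sum]
        simp only [Finsupp.sum_fintype, star_trivial, zero_mul, mul_zero, implies_true,
          Finset.sum_const_zero, mul_assoc]
        exact hx
    have hSv : SigX (0 : Fin (n+1)) *ᵥ v = 0 := by
      refine (hpsd.dotProduct_mulVec_zero_iff v).mp ?_
      have e : star v ⬝ᵥ (SigX (0 : Fin (n+1)) *ᵥ v)
          = ∑ i, ∑ j, v i * (SigX (0 : Fin (n+1)) i j * v j) := by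
        simp only [dotProduct, Matrix.mulVec, Pi.star_apply, star_trivial]
        exact Finset.sum_congr rfl fun i _ => by rw [Finset.mul_sum]
      rw [e, hq0]
    have : (SigX (0 : Fin (n+1))).det = 0 :=
      Matrix.exists_mulVec_eq_zero_iff.mp ⟨v, hv0, hSv⟩
    exact isUnit_iff_ne_zero.mp (hSigX (0 : Fin (n+1))) this
  have hVcβF : Vc *ᵥ βF = cvY := by
    rw [hβF, Matrix.mulVec_mulVec, Matrix.mul_nonsing_inv _ hVcUnit, Matrix.one_mulVec]
  -- ## the chosen coefficients
  set φ : Fin (n + 1) → ℝ := fun s => αb s + βb s ⬝ᵥ μv s + γbar ⬝ᵥ νv s with hφdef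
  set δ0 : Fin n → ℝ := fun k => φ k.castSucc - φ (Fin.last n) with hδdef
  set a0 : ℝ := φ (Fin.last n) + ∑ k, δ0 k * p k.castSucc with ha0def
  set c0 : Fin (n + 1) → Fin e → ℝ := fun i k => γb i k - γbar k with hc0def
  have hUsum : ∀ ω, a0 + ∑ k, δ0 k * U k ω = φ (S ω) := by
    intro ω
    have h1 : ∑ k, δ0 k * U k ω
        = (∑ k, δ0 k * (if S ω = k.castSucc then 1 else 0)) - ∑ k, δ0 k * p k.castSucc := by
      rw [← Finset.sum_sub_distrib]
      refine Finset.sum_congr rfl fun k _ => ?_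
      rw [hU k ω]; ring
    have h2 : ∑ k, δ0 k * (if S ω = k.castSucc then 1 else 0)
        = φ (S ω) - φ (Fin.last n) := by
      rcases Fin.eq_castSucc_or_eq_last (S ω) with ⟨m, hm⟩ | hm
      · rw [hm, Finset.sum_eq_single m]
        · simp [hδdef]
        · intro k _ hk
          have hne : ¬ (m.castSucc = k.castSucc) := fun hcc =>
            hk (Fin.castSucc_injective _ hcc).symm
          simp [hne]
        · intro habs; exact absurd (mem_univ m) habs
      · rw [hm]
        have hzero : ∀ k : Fin n, (if Fin.last n = k.castSucc then (1:ℝ) else 0) = 0 := by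
          intro k; rw [if_neg]; exact fun hcc => (Fin.castSucc_lt_last k).ne' hcc
        simp [hzero]
    rw [h1, h2, ha0def]; ring
  have hγbark : ∀ k, γbar k = ∑ s, p s * γb s k := by
    intro k; rw [hγbar]; simp
  have hCsum : ∀ ω, ∑ i, ∑ k, c0 i k * Ufull i ω * V ω k
      = ∑ k, (γb (S ω) k - γbar k) * V ω k := by
    intro ω
    rw [Finset.sum_comm]
    refine Finset.sum_congr rfl fun k _ => ?_
    rw [← Finset.sum_mul]
    congr 1
    have h1 : ∑ i, c0 i k * Ufull i ω
        = (∑ i, (γb i k - γbar k) * (if S ω = i then 1 else 0))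
          - ∑ i, (γb i k - γbar k) * p i := by
      rw [← Finset.sum_sub_distrib]
      refine Finset.sum_congr rfl fun i _ => ?_
      simp only [hc0def]
      rw [hUfull i ω]; ring
    have h2 : ∑ i, (γb i k - γbar k) * (if S ω = i then 1 else 0)
        = γb (S ω) k - γbar k := by
      simp only [mul_ite, mul_one, mul_zero]
      rw [Finset.sum_ite_eq]
      simp
    have h3 : ∑ i, (γb i k - γbar k) * p i = 0 := by
      have e1 : ∑ i, (γb i k - γbar k) * p i
          = (∑ i, p i * γb i k) - γbar k * ∑ i, p i := by
        rw [Finset.mul_sum, ← Finset.sum_sub_distrib]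
        exact Finset.sum_congr rfl fun i _ => by ring
      rw [e1, ← hγbark k, hpsum]; ring
    rw [h1, h2, h3, sub_zero]
  -- ## key residual identity
  have hr : ∀ ω, F a0 δ0 βF γbar c0 ω - Y ω
      = (∑ i, (βF i - βb (S ω) i) * (X ω i - μv (S ω) i)) - ε ω := by
    intro ω
    rw [hFdef]
    show formF S X V μv νv U Ufull a0 δ0 βF γbar c0 ω - Y ω = _
    rw [formF]
    rw [show a0 + (∑ k, δ0 k * U k ω) = φ (S ω) from hUsum ω]
    rw [hCsum ω, hY ω]
    simp only [hφdef, dotProduct, Pi.sub_apply, sub_mul, mul_sub, Finset.sum_sub_distrib]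
    ring
  -- ## residual on each stratum
  have hrs : ∀ s ω, S ω = s → F a0 δ0 βF γbar c0 ω - Y ω
      = (∑ i, (βF i - βb s i) * (X ω i - μv (S ω) i)) - G s ω := by
    intro s ω hω
    rw [hr ω, hGε s ω hω]
    have hb : βb (S ω) = βb s := by rw [hω]
    rw [hb]
  -- per-stratum integrals of the residual
  have hr0 : ∀ s, ∫ ω in {ω | S ω = s}, (F a0 δ0 βF γbar c0 ω - Y ω) ∂P = 0 := by
    intro s
    rw [hstr s _ _ (hrs s)]
    rw [integral_sub (integrable_finset_sum _ fun i _ =>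
        ((hIZ i).const_mul _)).integrableOn (hIG s).integrableOn,
      integral_finset_sum _ (fun i _ => ((hIZ i).const_mul _).integrableOn)]
    simp only [integral_const_mul, hZ0, hG0, mul_zero, Finset.sum_const_zero, sub_zero]
  have hrZ : ∀ s i, ∫ ω in {ω | S ω = s},
      (F a0 δ0 βF γbar c0 ω - Y ω) * (X ω i - μv (S ω) i) ∂P
      = ∑ j, (βF j - βb s j) * (p s * SigX s j i) := by
    intro s i
    have hpt : ∀ ω, S ω = s → (F a0 δ0 βF γbar c0 ω - Y ω) * (X ω i - μv (S ω) i)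
        = (∑ j, (βF j - βb s j) * ((X ω j - μv (S ω) j) * (X ω i - μv (S ω) i)))
          - (X ω i - μv (S ω) i) * G s ω := by
      intro ω hω
      rw [hrs s ω hω, sub_mul, Finset.sum_mul]
      congr 1
      · exact Finset.sum_congr rfl fun j _ => by ring
      · exact mul_comm _ _
    rw [hstr s _ _ hpt]
    rw [integral_sub (integrable_finset_sum _ fun j _ =>
        ((hIZZ j i).const_mul _)).integrableOn (hIZG s i).integrableOn,
      integral_finset_sum _ (fun j _ => ((hIZZ j i).const_mul _).integrableOn)]
    simp only [integral_const_mul, hZZ0, hZG0, sub_zero]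
  have hrW : ∀ s j, ∫ ω in {ω | S ω = s},
      (F a0 δ0 βF γbar c0 ω - Y ω) * (V ω j - νv (S ω) j) ∂P = 0 := by
    intro s j
    have hpt : ∀ ω, S ω = s → (F a0 δ0 βF γbar c0 ω - Y ω) * (V ω j - νv (S ω) j)
        = (∑ i, (βF i - βb s i) * ((X ω i - μv (S ω) i) * (V ω j - νv (S ω) j)))
          - (V ω j - νv (S ω) j) * G s ω := by
      intro ω hω
      rw [hrs s ω hω, sub_mul, Finset.sum_mul]
      congr 1
      · exact Finset.sum_congr rfl fun i _ => by ring
      · exact mul_comm _ _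
    rw [hstr s _ _ hpt]
    rw [integral_sub (integrable_finset_sum _ fun i _ =>
        ((hIZW i j).const_mul _)).integrableOn (hIWG s j).integrableOn,
      integral_finset_sum _ (fun i _ => ((hIZW i j).const_mul _).integrableOn)]
    simp only [integral_const_mul, hZW0, hWG0, mul_zero, Finset.sum_const_zero, sub_zero]
  -- ## global integrabilities of residual times regressors
  have hrI : Integrable (fun ω => F a0 δ0 βF γbar c0 ω - Y ω) P := hIL _ _ _ _ _
  have hIrZ : ∀ i, Integrable
      (fun ω => (F a0 δ0 βF γbar c0 ω - Y ω) * (X ω i - μv (S ω) i)) P := by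
    intro i
    have heq : (fun ω => (F a0 δ0 βF γbar c0 ω - Y ω) * (X ω i - μv (S ω) i))
        = fun ω => (X ω i - μv (S ω) i) * F a0 δ0 βF γbar c0 ω
          - (X ω i - μv (S ω) i) * Y ω := by
      funext ω; ring
    rw [heq]; exact (hIZF i _ _ _ _ _).sub (hIZY i)
  have hIrW : ∀ j, Integrable
      (fun ω => (F a0 δ0 βF γbar c0 ω - Y ω) * (V ω j - νv (S ω) j)) P := by
    intro j
    have heq : (fun ω => (F a0 δ0 βF γbar c0 ω - Y ω) * (V ω j - νv (S ω) j))
        = fun ω => (V ω j - νv (S ω) j) * F a0 δ0 βF γbar c0 ω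
          - (V ω j - νv (S ω) j) * Y ω := by
      funext ω; ring
    rw [heq]; exact (hIWF j _ _ _ _ _).sub (hIWY j)
  have hIrU : ∀ k, Integrable
      (fun ω => (F a0 δ0 βF γbar c0 ω - Y ω) * U k ω) P := by
    intro k
    have heq : (fun ω => (F a0 δ0 βF γbar c0 ω - Y ω) * U k ω)
        = fun ω => (fun t => (if t = k.castSucc then (1:ℝ) else 0) - p k.castSucc) (S ω)
          * (F a0 δ0 βF γbar c0 ω - Y ω) := by
      funext ω; rw [hU k ω]; ring
    rw [heq]; exact hIm (fun t => (if t = k.castSucc then (1:ℝ) else 0) - p k.castSucc) _ hrI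
  have hIrUV : ∀ i k, Integrable
      (fun ω => (F a0 δ0 βF γbar c0 ω - Y ω) * (Ufull i ω * V ω k)) P := by
    intro i k
    have heq : (fun ω => (F a0 δ0 βF γbar c0 ω - Y ω) * (Ufull i ω * V ω k))
        = fun ω => (fun t => (if t = i then (1:ℝ) else 0) - p i) (S ω)
            * ((F a0 δ0 βF γbar c0 ω - Y ω) * (V ω k - νv (S ω) k))
          + (fun t => ((if t = i then (1:ℝ) else 0) - p i) * νv t k) (S ω)
            * (F a0 δ0 βF γbar c0 ω - Y ω) := by
      funext ω; rw [hUfull i ω]; ring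
    rw [heq]
    exact (hIm (fun t => (if t = i then (1:ℝ) else 0) - p i) _ (hIrW k)).add
      (hIm (fun t => ((if t = i then (1:ℝ) else 0) - p i) * νv t k) _ hrI)
  -- ## global orthogonality to the basis
  have hB1 : ∫ ω, (F a0 δ0 βF γbar c0 ω - Y ω) ∂P = 0 := by
    rw [hsplit _ hrI]; exact Finset.sum_eq_zero fun s _ => hr0 s
  have hB2 : ∀ k, ∫ ω, (F a0 δ0 βF γbar c0 ω - Y ω) * U k ω ∂P = 0 := by
    intro k
    rw [hsplit _ (hIrU k)]
    refine Finset.sum_eq_zero fun s _ => ?_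
    have hpt : ∀ ω, S ω = s → (F a0 δ0 βF γbar c0 ω - Y ω) * U k ω
        = ((if s = k.castSucc then (1:ℝ) else 0) - p k.castSucc)
          * (F a0 δ0 βF γbar c0 ω - Y ω) := by
      intro ω hω; rw [hU k ω, hω]; ring
    rw [hstr s _ _ hpt, integral_const_mul, hr0 s, mul_zero]
  have hB3 : ∀ i, ∫ ω, (F a0 δ0 βF γbar c0 ω - Y ω) * (X ω i - μv (S ω) i) ∂P = 0 := by
    intro i
    rw [hsplit _ (hIrZ i)]
    have hmv : (Vc *ᵥ βF) i = ∑ s, p s * ∑ j, SigX s i j * βF j := by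
      simp only [Matrix.mulVec, dotProduct, hVc', Finset.sum_mul]
      rw [Finset.sum_comm]
      refine Finset.sum_congr rfl fun s _ => ?_
      rw [Finset.mul_sum]
      exact Finset.sum_congr rfl fun j _ => by ring
    have hkey : ∑ s, ∑ j, (βF j - βb s j) * (p s * SigX s j i)
        = (Vc *ᵥ βF) i - cvY i := by
      rw [hmv, hcvY' i, ← Finset.sum_sub_distrib]
      refine Finset.sum_congr rfl fun s _ => ?_
      rw [Finset.mul_sum, Finset.mul_sum, ← Finset.sum_sub_distrib]
      refine Finset.sum_congr rfl fun j _ => ?_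
      rw [hSymX s j i]; ring
    calc ∑ s, ∫ ω in {ω | S ω = s},
          (F a0 δ0 βF γbar c0 ω - Y ω) * (X ω i - μv (S ω) i) ∂P
        = ∑ s, ∑ j, (βF j - βb s j) * (p s * SigX s j i) :=
          Finset.sum_congr rfl fun s _ => hrZ s i
      _ = (Vc *ᵥ βF) i - cvY i := hkey
      _ = 0 := by rw [hVcβF, sub_self]
  have hB4 : ∀ j, ∫ ω, (F a0 δ0 βF γbar c0 ω - Y ω) * (V ω j - νv (S ω) j) ∂P = 0 := by
    intro j
    rw [hsplit _ (hIrW j)]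
    exact Finset.sum_eq_zero fun s _ => hrW s j
  have hB5 : ∀ i k, ∫ ω, (F a0 δ0 βF γbar c0 ω - Y ω) * (Ufull i ω * V ω k) ∂P = 0 := by
    intro i k
    rw [hsplit _ (hIrUV i k)]
    refine Finset.sum_eq_zero fun s _ => ?_
    have hpt : ∀ ω, S ω = s → (F a0 δ0 βF γbar c0 ω - Y ω) * (Ufull i ω * V ω k)
        = ((if s = i then (1:ℝ) else 0) - p i)
            * ((F a0 δ0 βF γbar c0 ω - Y ω) * (V ω k - νv (S ω) k))
          + (((if s = i then (1:ℝ) else 0) - p i) * νv s k)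
            * (F a0 δ0 βF γbar c0 ω - Y ω) := by
      intro ω hω; rw [hUfull i ω, hω]; ring
    rw [hstr s _ _ hpt,
      integral_add (((hIrW k).const_mul _).integrableOn) ((hrI.const_mul _).integrableOn),
      integral_const_mul, integral_const_mul, hrW s k, hr0 s, mul_zero, mul_zero, add_zero]
  -- ## orthogonality to every competing form
  have hptgen : ∀ (R : Ω → ℝ) (a'' : ℝ) (l'' : Fin n → ℝ) (b'' : Fin d → ℝ)
      (g'' : Fin e → ℝ) (c'' : Fin (n + 1) → Fin e → ℝ) (ω : Ω),
      R ω * F a'' l'' b'' g'' c'' ω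
        = a'' * R ω
          + ((∑ k, l'' k * (R ω * U k ω))
          + ((∑ i, b'' i * (R ω * (X ω i - μv (S ω) i)))
          + ((∑ j, g'' j * (R ω * (V ω j - νv (S ω) j)))
          + (∑ i, ∑ k, c'' i k * (R ω * (Ufull i ω * V ω k)))))) := by
    intro R a'' l'' b'' g'' c'' ω
    rw [hFdef]
    simp only [formF, dotProduct, Pi.sub_apply, Finset.mul_sum, mul_add, mul_comm,
      mul_left_comm, mul_assoc]
    ring
  have horthF : ∀ (a'' : ℝ) (l'' : Fin n → ℝ) (b'' : Fin d → ℝ) (g'' : Fin e → ℝ)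
      (c'' : Fin (n + 1) → Fin e → ℝ),
      ∫ ω, (F a0 δ0 βF γbar c0 ω - Y ω) * F a'' l'' b'' g'' c'' ω ∂P = 0 := by
    intro a'' l'' b'' g'' c''
    have hpt : (fun ω => (F a0 δ0 βF γbar c0 ω - Y ω) * F a'' l'' b'' g'' c'' ω)
        = fun ω => a'' * (F a0 δ0 βF γbar c0 ω - Y ω)
          + ((∑ k, l'' k * ((F a0 δ0 βF γbar c0 ω - Y ω) * U k ω))
          + ((∑ i, b'' i * ((F a0 δ0 βF γbar c0 ω - Y ω) * (X ω i - μv (S ω) i)))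
          + ((∑ j, g'' j * ((F a0 δ0 βF γbar c0 ω - Y ω) * (V ω j - νv (S ω) j)))
          + (∑ i, ∑ k, c'' i k * ((F a0 δ0 βF γbar c0 ω - Y ω) * (Ufull i ω * V ω k)))))) :=
      funext fun ω =>
        hptgen (fun ω => F a0 δ0 βF γbar c0 ω - Y ω) a'' l'' b'' g'' c'' ω
    have hC0 : Integrable (fun ω => a'' * (F a0 δ0 βF γbar c0 ω - Y ω)) P :=
      hrI.const_mul _
    have hC1 : Integrable (fun ω =>
        ∑ k, l'' k * ((F a0 δ0 βF γbar c0 ω - Y ω) * U k ω)) P :=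
      integrable_finset_sum _ fun k _ => (hIrU k).const_mul _
    have hC2 : Integrable (fun ω =>
        ∑ i, b'' i * ((F a0 δ0 βF γbar c0 ω - Y ω) * (X ω i - μv (S ω) i))) P :=
      integrable_finset_sum _ fun i _ => (hIrZ i).const_mul _
    have hC3 : Integrable (fun ω =>
        ∑ j, g'' j * ((F a0 δ0 βF γbar c0 ω - Y ω) * (V ω j - νv (S ω) j))) P :=
      integrable_finset_sum _ fun j _ => (hIrW j).const_mul _
    have hC4 : Integrable (fun ω =>
        ∑ i, ∑ k, c'' i k * ((F a0 δ0 βF γbar c0 ω - Y ω) * (Ufull i ω * V ω k))) P :=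
      integrable_finset_sum _ fun i _ =>
        integrable_finset_sum _ fun k _ => (hIrUV i k).const_mul _
    have hC34 : Integrable (fun ω =>
        (∑ j, g'' j * ((F a0 δ0 βF γbar c0 ω - Y ω) * (V ω j - νv (S ω) j)))
        + ∑ i, ∑ k, c'' i k * ((F a0 δ0 βF γbar c0 ω - Y ω) * (Ufull i ω * V ω k))) P :=
      hC3.add hC4
    have hC234 : Integrable (fun ω =>
        (∑ i, b'' i * ((F a0 δ0 βF γbar c0 ω - Y ω) * (X ω i - μv (S ω) i)))
        + ((∑ j, g'' j * ((F a0 δ0 βF γbar c0 ω - Y ω) * (V ω j - νv (S ω) j)))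
        + ∑ i, ∑ k, c'' i k * ((F a0 δ0 βF γbar c0 ω - Y ω) * (Ufull i ω * V ω k)))) P :=
      hC2.add hC34
    have hC1234 : Integrable (fun ω =>
        (∑ k, l'' k * ((F a0 δ0 βF γbar c0 ω - Y ω) * U k ω))
        + ((∑ i, b'' i * ((F a0 δ0 βF γbar c0 ω - Y ω) * (X ω i - μv (S ω) i)))
        + ((∑ j, g'' j * ((F a0 δ0 βF γbar c0 ω - Y ω) * (V ω j - νv (S ω) j)))
        + ∑ i, ∑ k, c'' i k * ((F a0 δ0 βF γbar c0 ω - Y ω) * (Ufull i ω * V ω k))))) P :=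
      hC1.add hC234
    have h0 : ∫ ω, a'' * (F a0 δ0 βF γbar c0 ω - Y ω) ∂P = 0 := by
      rw [integral_const_mul, hB1, mul_zero]
    have h1 : ∫ ω, (∑ k, l'' k * ((F a0 δ0 βF γbar c0 ω - Y ω) * U k ω)) ∂P = 0 := by
      rw [integral_finset_sum _ (fun k _ => (hIrU k).const_mul _)]
      refine Finset.sum_eq_zero fun k _ => ?_
      rw [integral_const_mul, hB2 k, mul_zero]
    have h2 : ∫ ω, (∑ i, b'' i
        * ((F a0 δ0 βF γbar c0 ω - Y ω) * (X ω i - μv (S ω) i))) ∂P = 0 := by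
      rw [integral_finset_sum _ (fun i _ => (hIrZ i).const_mul _)]
      refine Finset.sum_eq_zero fun i _ => ?_
      rw [integral_const_mul, hB3 i, mul_zero]
    have h3 : ∫ ω, (∑ j, g'' j
        * ((F a0 δ0 βF γbar c0 ω - Y ω) * (V ω j - νv (S ω) j))) ∂P = 0 := by
      rw [integral_finset_sum _ (fun j _ => (hIrW j).const_mul _)]
      refine Finset.sum_eq_zero fun j _ => ?_
      rw [integral_const_mul, hB4 j, mul_zero]
    have h4 : ∫ ω, (∑ i, ∑ k, c'' i k
        * ((F a0 δ0 βF γbar c0 ω - Y ω) * (Ufull i ω * V ω k))) ∂P = 0 := by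
      rw [integral_finset_sum _ (fun i _ =>
        integrable_finset_sum _ fun k _ => (hIrUV i k).const_mul _)]
      refine Finset.sum_eq_zero fun i _ => ?_
      rw [integral_finset_sum _ (fun k _ => (hIrUV i k).const_mul _)]
      refine Finset.sum_eq_zero fun k _ => ?_
      rw [integral_const_mul, hB5 i k, mul_zero]
    rw [hpt, integral_add hC0 hC1234, integral_add hC1 hC234, integral_add hC2 hC34,
      integral_add hC3 hC4, h0, h1, h2, h3, h4]
    norm_num
  -- ## final assembly
  refine ⟨a0, δ0, c0, ?_⟩
  intro a' l b g c'
  show ∫ ω, (F a0 δ0 βF γbar c0 ω - Y ω) ^ 2 ∂P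
      ≤ ∫ ω, (F a' l b g c' ω - Y ω) ^ 2 ∂P
  have hdec : ∀ ω, F a' l b g c' ω - Y ω
      = (F a0 δ0 βF γbar c0 ω - Y ω)
        + F (a' - a0) (l - δ0) (b - βF) (g - γbar) (c' - c0) ω := by
    intro ω
    rw [hFdef]
    simp only [formF, dotProduct, Pi.sub_apply, sub_mul, mul_sub, Finset.sum_sub_distrib]
    ring
  have hIrh : Integrable (fun ω => (F a0 δ0 βF γbar c0 ω - Y ω)
      * F (a' - a0) (l - δ0) (b - βF) (g - γbar) (c' - c0) ω) P := by
    have heq : (fun ω => (F a0 δ0 βF γbar c0 ω - Y ω)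
        * F (a' - a0) (l - δ0) (b - βF) (g - γbar) (c' - c0) ω)
        = fun ω => F a0 δ0 βF γbar c0 ω
            * F (a' - a0) (l - δ0) (b - βF) (g - γbar) (c' - c0) ω
          - F (a' - a0) (l - δ0) (b - βF) (g - γbar) (c' - c0) ω * Y ω := by
      funext ω; ring
    rw [heq]; exact (hIFF _ _ _ _ _ _ _ _ _ _).sub (hIFY _ _ _ _ _)
  have hrw : (fun ω => (F a' l b g c' ω - Y ω) ^ 2)
      = fun ω => (F a0 δ0 βF γbar c0 ω - Y ω) ^ 2
        + (2 * ((F a0 δ0 βF γbar c0 ω - Y ω)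
            * F (a' - a0) (l - δ0) (b - βF) (g - γbar) (c' - c0) ω)
          + (F (a' - a0) (l - δ0) (b - βF) (g - γbar) (c' - c0) ω) ^ 2) := by
    funext ω; rw [hdec ω]; ring
  have hD1 : Integrable (fun ω =>
      2 * ((F a0 δ0 βF γbar c0 ω - Y ω)
        * F (a' - a0) (l - δ0) (b - βF) (g - γbar) (c' - c0) ω)) P := hIrh.const_mul 2
  have hD2 : Integrable (fun ω =>
      (F (a' - a0) (l - δ0) (b - βF) (g - γbar) (c' - c0) ω) ^ 2) P := hIFsq _ _ _ _ _
  have hD12 : Integrable (fun ω =>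
      2 * ((F a0 δ0 βF γbar c0 ω - Y ω)
        * F (a' - a0) (l - δ0) (b - βF) (g - γbar) (c' - c0) ω)
      + (F (a' - a0) (l - δ0) (b - βF) (g - γbar) (c' - c0) ω) ^ 2) P := hD1.add hD2
  rw [hrw, integral_add (hI2 _ _ _ _ _) hD12,
    integral_add hD1 hD2, integral_const_mul,
    horthF (a' - a0) (l - δ0) (b - βF) (g - γbar) (c' - c0), mul_zero, zero_add]
  have hnn : 0 ≤ ∫ ω, (F (a' - a0) (l - δ0) (b - βF) (g - γbar) (c' - c0) ω) ^ 2 ∂P :=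
    integral_nonneg fun ω => sq_nonneg _
  linarith
end

section
/- If f: ℝ^{S̄} → ℝ satisfies (i) f(kb) = k f(b) for all k ∈ ℝ and b ∈ ℝ^{S̄}, (ii) f(b,…,b) = b for at least one nonzero b ∈ ℝ, (iii) f(b₁,…,b_{S̄}) ≥ 0 whenever all b_s > 0, and (iv) f is differentiable at 0, then f is a convex combination of its arguments: f(b) = Σ_i w_i b_i with w_i ≥ 0 and Σ_i w_i = 1. -/
open Finset

/-- An aggregation function that is homogeneous, agrees with its arguments on some nonzero
constant vector, is nonnegative on positive vectors, and is differentiable at `0`, must be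
a convex combination of its arguments. -/
theorem stmt18
    (n : ℕ) (hn : 0 < n) (f : (Fin n → ℝ) → ℝ)
    (h1 : ∀ (k : ℝ) (b : Fin n → ℝ), f (k • b) = k * f b)
    (h2 : ∃ b : ℝ, b ≠ 0 ∧ f (fun _ => b) = b)
    (h3 : ∀ b : Fin n → ℝ, (∀ s, 0 < b s) → 0 ≤ f b)
    (h4 : DifferentiableAt ℝ f 0) :
    ∃ w : Fin n → ℝ, (∀ i, 0 ≤ w i) ∧ (∑ i, w i = 1) ∧ ∀ b, f b = ∑ i, w i * b i := by
  set L := fderiv ℝ f 0 with hL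
  have hf0 : f 0 = 0 := by
    have := h1 0 0
    simpa using this
  -- f equals its derivative at 0
  have hlin : ∀ b, f b = L b := by
    intro b
    have hD : HasDerivAt (fun t : ℝ => f (t • b)) (L b) 0 := by
      have h1' : HasDerivAt (fun t : ℝ => t • b) b 0 := by
        simpa using (hasDerivAt_id (0 : ℝ)).smul_const b
      have hF : HasFDerivAt f L ((0 : ℝ) • b) := by
        rw [zero_smul]; exact h4.hasFDerivAt
      have := hF.comp_hasDerivAt 0 h1'
      exact this
    have hD2 : HasDerivAt (fun t : ℝ => f (t • b)) (f b) 0 := by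
      have heq : (fun t : ℝ => f (t • b)) = fun t : ℝ => t * f b := by
        funext t; exact h1 t b
      rw [heq]
      simpa using (hasDerivAt_id (0 : ℝ)).mul_const (f b)
    exact (hD.unique hD2).symm
  have hone : f (fun _ => (1 : ℝ)) = 1 := by
    obtain ⟨b, hb, hfb⟩ := h2
    have key : f (b • fun _ => (1 : ℝ)) = b * f (fun _ => 1) := h1 b _
    have : (b • fun _ : Fin n => (1 : ℝ)) = fun _ : Fin n => b := by
      funext s; simp
    rw [this, hfb] at key
    have h' : b * 1 = b * f (fun _ => 1) := by rw [mul_one, ← key]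
    exact (mul_left_cancel₀ hb h').symm
  set w : Fin n → ℝ := fun i => f (Pi.single i 1) with hw
  have hsum : ∀ b : Fin n → ℝ, f b = ∑ i, w i * b i := by
    intro b
    have hb : b = ∑ i, b i • (Pi.single i 1 : Fin n → ℝ) := by
      funext s
      simp [Finset.sum_apply, Pi.single_apply, mul_comm]
    rw [hlin]
    conv_lhs => rw [hb]
    rw [map_sum]
    refine Finset.sum_congr rfl fun i _ => ?_
    rw [map_smul, ← hlin]
    simp [hw, mul_comm]
  refine ⟨w, ?_, ?_, hsum⟩
  · intro i
    refine le_of_forall_pos_le_add ?_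
    intro ε hε
    set c : Fin n → ℝ := (Pi.single i 1 : Fin n → ℝ) + fun _ => ε with hc
    have hpos : ∀ s, 0 < c s := by
      intro s
      simp only [hc, Pi.add_apply]
      rcases eq_or_ne s i with rfl | h
      · simp; linarith
      · rw [Pi.single_eq_of_ne h]; simpa using hε
    have h0 := h3 c hpos
    rw [hsum c] at h0
    have hcs : ∑ j, w j * c j = w i + ε * ∑ j, w j := by
      simp only [hc, Pi.add_apply, mul_add, Finset.sum_add_distrib]
      rw [Finset.mul_sum]
      congr 1
      · rw [Finset.sum_eq_single i]
        · simp
        · intro j _ hj; rw [Pi.single_eq_of_ne hj, mul_zero]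
        · simp
      · exact Finset.sum_congr rfl fun j _ => by ring
    rw [hcs] at h0
    have hwsum : ∑ j, w j = 1 := by
      have h1' := hsum (fun _ => (1 : ℝ))
      rw [hone] at h1'
      simpa using h1'.symm
    rw [hwsum, mul_one] at h0
    linarith
  · have h1' := hsum (fun _ => (1 : ℝ))
    rw [hone] at h1'
    simpa using h1'.symm
end
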